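/- arXiv:2502.08128 — 5 statements merged into one kernel-verified Lean document; each statement's English description precedes it below -/
import Mathlib

section
/- The number of labelled trees on the vertex set {1,...,n} is exactly n^(n-2). -/
open Finset Function

namespace Cayley

/-- Parent-function predicate: `f` is the parent function of a tree on vertex set `V`
rooted at `r`. -/
def PF (V : Finset ℕ) (r : ℕ) (f : ℕ → ℕ) : Prop :=
  (∀ v, v ∉ V → f v = v) ∧ f r = r ∧ (∀ v ∈ V, f v ∈ V) ∧ ∀ v ∈ V, ∃ k, f^[k] v = r

lemma PF.iter_mem {V : Finset ℕ} {r : ℕ} {f : ℕ → ℕ} (hf : PF V r f) {v : ℕ} (hv : v ∈ V)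
    (k : ℕ) : f^[k] v ∈ V := by
  induction k with
  | zero => simpa
  | succ k ih => rw [Function.iterate_succ_apply']; exact hf.2.2.1 _ ih

lemma PF.ne_self {V : Finset ℕ} {r : ℕ} {f : ℕ → ℕ} (hf : PF V r f) {v : ℕ} (hv : v ∈ V)
    (hvr : v ≠ r) : f v ≠ v := by
  intro h
  obtain ⟨k, hk⟩ := hf.2.2.2 v hv
  have : ∀ m : ℕ, f^[m] v = v := by
    intro m; induction m with
    | zero => rfl
    | succ m ih => rw [Function.iterate_succ_apply', ih, h]
  rw [this k] at hk; exact hvr hk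

lemma PF.no_cycle {V : Finset ℕ} {r : ℕ} {f : ℕ → ℕ} (hf : PF V r f) {v : ℕ} (hv : v ∈ V)
    {k : ℕ} (hk : f^[k + 1] v = v) : v = r := by
  obtain ⟨m, hm⟩ := hf.2.2.2 v hv
  have hper : ∀ t : ℕ, f^[(k+1) * t] v = v := by
    intro t
    rw [Function.iterate_mul]
    exact Function.iterate_fixed hk t
  have hstay : ∀ s : ℕ, f^[s + m] v = r := by
    intro s
    rw [Function.iterate_add_apply, hm]
    exact Function.iterate_fixed hf.2.1 s
  have h1 := hper (m + 1)
  have h2 : (k + 1) * (m + 1) = (k * m + k + 1) + m := by ring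
  rw [h2, hstay] at h1
  exact h1.symm

/-- iterates agree if the functions agree along the orbit -/
lemma iter_agree {f g : ℕ → ℕ} {v : ℕ} (k : ℕ) (h : ∀ j < k, g (f^[j] v) = f (f^[j] v)) :
    g^[k] v = f^[k] v := by
  induction k with
  | zero => rfl
  | succ k ih =>
    rw [Function.iterate_succ_apply', Function.iterate_succ_apply',
      ih (fun j hj => h j (Nat.lt_succ_of_lt hj)), h k (Nat.lt_succ_self k)]

/-- the set of leaves -/
def leaves (V : Finset ℕ) (r : ℕ) (f : ℕ → ℕ) : Finset ℕ :=
  V.filter fun v => v ≠ r ∧ ∀ u ∈ V, f u ≠ v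

lemma leaves_eq {V : Finset ℕ} {r : ℕ} {f : ℕ → ℕ} (hfr : f r = r) :
    leaves V r f = V \ insert r ((V.erase r).image f) := by
  ext v
  simp only [leaves, mem_filter, mem_sdiff, mem_insert, mem_image, mem_erase, not_or, not_exists]
  constructor
  · rintro ⟨hv, hvr, hall⟩
    exact ⟨hv, hvr, by push_neg; intro u ⟨hur, hu⟩; exact hall u hu⟩
  · rintro ⟨hv, hvr, himg⟩
    push_neg at himg
    refine ⟨hv, hvr, fun u hu => ?_⟩
    rcases eq_or_ne u r with rfl | hur
    · rw [hfr]; exact Ne.symm hvr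
    · exact himg u ⟨hur, hu⟩

open Classical in
noncomputable def dep (f : ℕ → ℕ) (r v : ℕ) : ℕ :=
  if h : ∃ k, f^[k] v = r then Nat.find h else 0

lemma dep_spec {f : ℕ → ℕ} {r v : ℕ} (h : ∃ k, f^[k] v = r) : f^[dep f r v] v = r := by
  rw [dep, dif_pos h]; exact Nat.find_spec h

lemma dep_min {f : ℕ → ℕ} {r v : ℕ} {k : ℕ} (hk : f^[k] v = r) : dep f r v ≤ k := by
  rw [dep, dif_pos ⟨k, hk⟩]; exact Nat.find_min' _ hk

lemma dep_step {V : Finset ℕ} {r : ℕ} {f : ℕ → ℕ} (hf : PF V r f) {v : ℕ} (hv : v ∈ V)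
    (hvr : v ≠ r) : dep f r v = dep f r (f v) + 1 := by
  obtain ⟨k, hk⟩ := hf.2.2.2 v hv
  have hk0 : k ≠ 0 := by rintro rfl; exact hvr hk
  obtain ⟨k, rfl⟩ := Nat.exists_eq_succ_of_ne_zero hk0
  have hfv : f^[k] (f v) = r := by rwa [← Function.iterate_succ_apply]
  have h1 : dep f r v ≤ dep f r (f v) + 1 := by
    apply dep_min
    rw [Function.iterate_succ_apply]
    exact dep_spec ⟨k, hfv⟩
  have h2 : dep f r (f v) + 1 ≤ dep f r v := by
    have hd : f^[dep f r v] v = r := dep_spec ⟨k + 1, hk⟩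
    have hd0 : dep f r v ≠ 0 := by
      intro h0; rw [h0] at hd; exact hvr hd
    obtain ⟨d, hdd⟩ := Nat.exists_eq_succ_of_ne_zero hd0
    rw [hdd] at hd ⊢
    rw [Function.iterate_succ_apply] at hd
    exact Nat.succ_le_succ (dep_min hd)
  omega

lemma leaves_nonempty {V : Finset ℕ} {r : ℕ} {f : ℕ → ℕ} (hf : PF V r f)
    (hne : (V.erase r).Nonempty) : (leaves V r f).Nonempty := by
  obtain ⟨v, hv, hmax⟩ := Finset.exists_max_image (V.erase r) (dep f r) hne
  refine ⟨v, ?_⟩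
  rw [mem_erase] at hv
  simp only [leaves, mem_filter]
  refine ⟨hv.2, hv.1, fun u hu hfu => ?_⟩
  have hur : u ≠ r := by
    rintro rfl; rw [hf.2.1] at hfu; exact hv.1 hfu.symm
  have := hmax u (mem_erase.2 ⟨hur, hu⟩)
  rw [dep_step hf hu hur, hfu] at this
  omega

def pick (s : Finset ℕ) : ℕ := if h : s.Nonempty then s.min' h else 0

lemma pick_mem {s : Finset ℕ} (h : s.Nonempty) : pick s ∈ s := by
  rw [pick, dif_pos h]; exact s.min'_mem h


/-- Prüfer encoding with fuel -/
def enc : ℕ → Finset ℕ → ℕ → (ℕ → ℕ) → List ℕ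
  | 0, _, _, _ => []
  | m + 1, V, r, f =>
    f (pick (leaves V r f)) ::
      enc m (V.erase (pick (leaves V r f))) r (update f (pick (leaves V r f)) (pick (leaves V r f)))

/-- Prüfer decoding -/
def dec (V : Finset ℕ) (r : ℕ) : List ℕ → ℕ → ℕ
  | [] => id
  | p :: t =>
    update (dec (V.erase (pick (V \ insert r (p :: t).toFinset))) r t)
      (pick (V \ insert r (p :: t).toFinset)) p

def IsCode (V : Finset ℕ) (r : ℕ) (l : List ℕ) : Prop :=
  l.length + 1 = V.card ∧ (∀ x ∈ l, x ∈ V) ∧ (l ≠ [] → l.getLast? = some r)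

/-- facts about removing the picked leaf -/
lemma leaf_step {V : Finset ℕ} {r : ℕ} {f : ℕ → ℕ} (hr : r ∈ V) (hf : PF V r f)
    (hne : (V.erase r).Nonempty) :
    pick (leaves V r f) ∈ V ∧ pick (leaves V r f) ≠ r ∧
      (∀ u ∈ V, f u ≠ pick (leaves V r f)) ∧
      f (pick (leaves V r f)) ∈ V.erase (pick (leaves V r f)) ∧
      PF (V.erase (pick (leaves V r f))) r
        (update f (pick (leaves V r f)) (pick (leaves V r f))) := by
  set l := pick (leaves V r f) with hl
  have hmem : l ∈ leaves V r f := pick_mem (leaves_nonempty hf hne)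
  simp only [leaves, mem_filter] at hmem
  obtain ⟨hlV, hlr, hleaf⟩ := hmem
  have hfl : f l ≠ l := hf.ne_self hlV hlr
  have hflV : f l ∈ V.erase l := mem_erase.2 ⟨hfl, hf.2.2.1 _ hlV⟩
  refine ⟨hlV, hlr, hleaf, hflV, ?_, ?_, ?_, ?_⟩
  · intro v hv
    rcases eq_or_ne v l with rfl | hvl
    · simp
    · rw [update_of_ne hvl]
      apply hf.1
      intro hvV
      exact hv (mem_erase.2 ⟨hvl, hvV⟩)
  · rw [update_of_ne (Ne.symm hlr)]; exact hf.2.1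
  · intro v hv
    rw [mem_erase] at hv
    rw [update_of_ne hv.1]
    exact mem_erase.2 ⟨hleaf v hv.2, hf.2.2.1 v hv.2⟩
  · intro v hv
    rw [mem_erase] at hv
    obtain ⟨k, hk⟩ := hf.2.2.2 v hv.2
    have horb : ∀ j, f^[j] v ≠ l := by
      intro j
      cases j with
      | zero => exact hv.1
      | succ j =>
        rw [Function.iterate_succ_apply']
        exact hleaf _ (hf.iter_mem hv.2 j)
    refine ⟨k, ?_⟩
    rw [iter_agree k (fun j _ => update_of_ne (horb j) _ _)]
    exact hk

lemma card_two_le_of_code {V : Finset ℕ} {r : ℕ} {p : ℕ} {t : List ℕ} (hr : r ∈ V)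
    (hc : IsCode V r (p :: t)) : (V.erase r).Nonempty := by
  rw [← Finset.card_pos, Finset.card_erase_of_mem hr]
  have := hc.1
  simp only [List.length_cons] at this
  omega

/-- A: entries of the encoding are exactly the parents of non-root vertices -/
lemma enc_toFinset {r : ℕ} : ∀ (m : ℕ) (V : Finset ℕ) (f : ℕ → ℕ), r ∈ V → PF V r f →
    V.card = m + 1 → (enc m V r f).toFinset = (V.erase r).image f := by
  intro m
  induction m with
  | zero =>
    intro V f hr hf hcard
    have : V = {r} := Finset.eq_singleton_iff_unique_mem.2
      ⟨hr, fun x hx => Finset.card_le_one.1 (le_of_eq hcard) x hx r hr⟩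
    subst this
    simp [enc]
  | succ m ih =>
    intro V f hr hf hcard
    have hne : (V.erase r).Nonempty := by
      rw [← Finset.card_pos, Finset.card_erase_of_mem hr]; omega
    obtain ⟨hlV, hlr, hleaf, hflV, hpf'⟩ := leaf_step hr hf hne
    set l := pick (leaves V r f) with hldef
    have hr' : r ∈ V.erase l := mem_erase.2 ⟨Ne.symm hlr, hr⟩
    have hcard' : (V.erase l).card = m + 1 := by
      rw [Finset.card_erase_of_mem hlV]; omega
    have IH := ih (V.erase l) (update f l l) hr' hpf' hcard'
    show (f l :: enc m (V.erase l) r (update f l l)).toFinset = _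
    rw [List.toFinset_cons, IH]
    have h1 : ((V.erase l).erase r).image (update f l l) = ((V.erase l).erase r).image f := by
      apply Finset.image_congr
      intro x hx
      simp only [Finset.coe_erase, Set.mem_diff] at hx
      exact update_of_ne (by simp [mem_erase] at hx; tauto) _ _
    rw [h1]
    have h2 : V.erase r = insert l ((V.erase l).erase r) := by
      rw [Finset.erase_right_comm]
      rw [Finset.insert_erase (mem_erase.2 ⟨hlr, hlV⟩)]
    rw [h2, Finset.image_insert]

/-- B: the encoding is a code -/
lemma enc_isCode {r : ℕ} : ∀ (m : ℕ) (V : Finset ℕ) (f : ℕ → ℕ), r ∈ V → PF V r f →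
    V.card = m + 1 → IsCode V r (enc m V r f) := by
  intro m
  induction m with
  | zero =>
    intro V f hr hf hcard
    exact ⟨by simp [enc, hcard], by simp [enc], by simp [enc]⟩
  | succ m ih =>
    intro V f hr hf hcard
    have hne : (V.erase r).Nonempty := by
      rw [← Finset.card_pos, Finset.card_erase_of_mem hr]; omega
    obtain ⟨hlV, hlr, hleaf, hflV, hpf'⟩ := leaf_step hr hf hne
    set l := pick (leaves V r f) with hldef
    have hr' : r ∈ V.erase l := mem_erase.2 ⟨Ne.symm hlr, hr⟩
    have hcard' : (V.erase l).card = m + 1 := by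
      rw [Finset.card_erase_of_mem hlV]; omega
    have IH := ih (V.erase l) (update f l l) hr' hpf' hcard'
    have henc : enc (m + 1) V r f = f l :: enc m (V.erase l) r (update f l l) := rfl
    rw [henc]
    have hlen := IH.1
    rw [hcard'] at hlen
    refine ⟨by simp only [List.length_cons]; omega, ?_, ?_⟩
    · intro x hx
      rcases List.mem_cons.1 hx with rfl | hx
      · exact hf.2.2.1 _ hlV
      · exact (mem_erase.1 (IH.2.1 x hx)).2
    · intro _
      cases hT : enc m (V.erase l) r (update f l l) with
      | nil =>
        have hc1 : (V.erase l).card = 1 := by rw [← IH.1, hT]; simp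
        have hV1 : V.erase l = {r} := by
          obtain ⟨a, ha⟩ := Finset.card_eq_one.1 hc1
          rw [ha] at hr' ⊢
          rw [Finset.mem_singleton] at hr'
          rw [hr']
        have hfl : f l = r := by rw [hV1, Finset.mem_singleton] at hflV; exact hflV
        simp [hT, hfl]
      | cons y ys =>
        rw [List.getLast?_cons_cons]
        rw [← hT]
        exact IH.2.2 (by simp [hT])


/-- facts about the picked vertex in decoding -/
lemma dec_step {V : Finset ℕ} {r p : ℕ} {t : List ℕ} (hr : r ∈ V) (hc : IsCode V r (p :: t)) :
    pick (V \ insert r (p :: t).toFinset) ∈ V ∧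
    pick (V \ insert r (p :: t).toFinset) ≠ r ∧
    pick (V \ insert r (p :: t).toFinset) ∉ (p :: t).toFinset ∧
    IsCode (V.erase (pick (V \ insert r (p :: t).toFinset))) r t := by
  have hrl : (p :: t).getLast? = some r := hc.2.2 (by simp)
  have hrt : r ∈ (p :: t).toFinset := by
    rw [List.mem_toFinset]
    exact List.mem_of_mem_getLast? (hrl ▸ rfl)
  have hXV : insert r (p :: t).toFinset ⊆ V := by
    intro x hx
    rcases Finset.mem_insert.1 hx with rfl | hx
    · exact hr
    · exact hc.2.1 x (List.mem_toFinset.1 hx)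
  have hXcard : (insert r (p :: t).toFinset).card < V.card := by
    rw [Finset.insert_eq_self.2 hrt]
    calc (p :: t).toFinset.card ≤ (p :: t).length := List.toFinset_card_le _
    _ < V.card := by have := hc.1; simp at this ⊢; omega
  have hSne : (V \ insert r (p :: t).toFinset).Nonempty := by
    rw [← Finset.card_pos, Finset.card_sdiff_of_subset hXV]
    omega
  have hmem := pick_mem hSne
  rw [Finset.mem_sdiff, Finset.mem_insert, not_or] at hmem
  obtain ⟨hlV, hlr, hlt⟩ := hmem
  refine ⟨hlV, hlr, hlt, ?_, ?_, ?_⟩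
  · rw [Finset.card_erase_of_mem hlV]
    have := hc.1; simp at this; omega
  · intro x hx
    refine mem_erase.2 ⟨?_, hc.2.1 x (List.mem_cons_of_mem _ hx)⟩
    intro h; subst h
    exact hlt (List.mem_toFinset.2 (List.mem_cons_of_mem _ hx))
  · intro hne
    obtain ⟨y, ys, rfl⟩ := List.exists_cons_of_ne_nil hne
    rw [← List.getLast?_cons_cons (a := p)]
    exact hrl

/-- C: decodings of codes are parent functions -/
lemma dec_pf {r : ℕ} : ∀ (l : List ℕ) (V : Finset ℕ), r ∈ V → IsCode V r l →
    PF V r (dec V r l) := by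
  intro l
  induction l with
  | nil =>
    intro V hr hc
    have hV : V = {r} := by
      have h1 : V.card = 1 := by have := hc.1; simpa using this.symm
      obtain ⟨a, ha⟩ := Finset.card_eq_one.1 h1
      rw [ha] at hr ⊢
      rw [Finset.mem_singleton] at hr
      rw [hr]
    subst hV
    exact ⟨fun v _ => rfl, rfl, fun v hv => by simpa [dec] using hv,
      fun v hv => ⟨0, by simpa using hv⟩⟩
  | cons p t ih =>
    intro V hr hc
    obtain ⟨hlV, hlr, hlt, hc'⟩ := dec_step hr hc
    set l := pick (V \ insert r (p :: t).toFinset) with hldef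
    have hr' : r ∈ V.erase l := mem_erase.2 ⟨Ne.symm hlr, hr⟩
    have hg := ih (V.erase l) hr' hc'
    set g := dec (V.erase l) r t with hgdef
    have hgl : g l = l := hg.1 l (by simp)
    have hdec : dec V r (p :: t) = update g l p := rfl
    rw [hdec]
    have hpV : p ∈ V := hc.2.1 p (by simp)
    have hpl : p ≠ l := fun h => hlt (h ▸ List.mem_toFinset.2 (List.mem_cons_self))
    have hpV' : p ∈ V.erase l := mem_erase.2 ⟨hpl, hpV⟩
    have horb : ∀ v ∈ V.erase l, ∀ k, (update g l p)^[k] v = g^[k] v := by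
      intro v hv k
      apply iter_agree
      intro j _
      exact update_of_ne (mem_erase.1 (hg.iter_mem hv j)).1 _ _
    refine ⟨?_, ?_, ?_, ?_⟩
    · intro v hv
      rcases eq_or_ne v l with rfl | hvl
      · exact absurd hlV (by simpa using hv)
      · rw [update_of_ne hvl]
        exact hg.1 v (fun h => hv (Finset.mem_of_mem_erase h))
    · rw [update_of_ne (Ne.symm hlr)]; exact hg.2.1
    · intro v hv
      rcases eq_or_ne v l with rfl | hvl
      · rw [update_self]; exact hpV
      · rw [update_of_ne hvl]
        exact Finset.mem_of_mem_erase (hg.2.2.1 v (mem_erase.2 ⟨hvl, hv⟩))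
    · intro v hv
      rcases eq_or_ne v l with rfl | hvl
      · obtain ⟨k, hk⟩ := hg.2.2.2 p hpV'
        refine ⟨k + 1, ?_⟩
        rw [Function.iterate_succ_apply, update_self, horb p hpV' k]
        exact hk
      · obtain ⟨k, hk⟩ := hg.2.2.2 v (mem_erase.2 ⟨hvl, hv⟩)
        exact ⟨k, by rw [horb v (mem_erase.2 ⟨hvl, hv⟩) k]; exact hk⟩

/-- D: dec ∘ enc = id -/
lemma dec_enc {r : ℕ} : ∀ (m : ℕ) (V : Finset ℕ) (f : ℕ → ℕ), r ∈ V → PF V r f →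
    V.card = m + 1 → dec V r (enc m V r f) = f := by
  intro m
  induction m with
  | zero =>
    intro V f hr hf hcard
    have hV : V = {r} := by
      obtain ⟨a, ha⟩ := Finset.card_eq_one.1 hcard
      rw [ha] at hr ⊢
      rw [Finset.mem_singleton] at hr
      rw [hr]
    subst hV
    funext v
    show v = f v
    rcases eq_or_ne v r with rfl | hvr
    · exact hf.2.1.symm
    · exact (hf.1 v (by simpa using hvr)).symm
  | succ m ih =>
    intro V f hr hf hcard
    have hne : (V.erase r).Nonempty := by
      rw [← Finset.card_pos, Finset.card_erase_of_mem hr]; omega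
    obtain ⟨hlV, hlr, hleaf, hflV, hpf'⟩ := leaf_step hr hf hne
    set l := pick (leaves V r f) with hldef
    have hr' : r ∈ V.erase l := mem_erase.2 ⟨Ne.symm hlr, hr⟩
    have hcard' : (V.erase l).card = m + 1 := by
      rw [Finset.card_erase_of_mem hlV]; omega
    have henc : enc (m + 1) V r f = f l :: enc m (V.erase l) r (update f l l) := rfl
    have hA := enc_toFinset (m + 1) V f hr hf hcard
    -- the picked vertex of decoding equals l
    have hS : V \ insert r (enc (m + 1) V r f).toFinset = leaves V r f := by
      rw [hA, (leaves_eq hf.2.1 : leaves V r f = _)]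
    rw [henc] at hS
    have hpick : pick ((f l :: enc m (V.erase l) r (update f l l)).toFinset |> (V \ insert r ·))
        = l := by
      show pick (V \ insert r _) = l
      rw [hS]
    rw [henc]
    show update (dec (V.erase _) r (enc m (V.erase l) r (update f l l))) _ (f l) = f
    rw [hpick]
    rw [ih (V.erase l) (update f l l) hr' hpf' hcard']
    funext v
    rcases eq_or_ne v l with rfl | hvl
    · rw [update_self]
    · rw [update_of_ne hvl, update_of_ne hvl]

/-- E: enc ∘ dec = id -/
lemma enc_dec {r : ℕ} : ∀ (l : List ℕ) (V : Finset ℕ), r ∈ V → IsCode V r l →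
    enc l.length V r (dec V r l) = l := by
  intro l
  induction l with
  | nil => intro V hr hc; rfl
  | cons p t ih =>
    intro V hr hc
    obtain ⟨hlV, hlr, hlt, hc'⟩ := dec_step hr hc
    set l := pick (V \ insert r (p :: t).toFinset) with hldef
    have hr' : r ∈ V.erase l := mem_erase.2 ⟨Ne.symm hlr, hr⟩
    have hg := dec_pf t (V.erase l) hr' hc'
    set g := dec (V.erase l) r t with hgdef
    have hIH : enc t.length (V.erase l) r g = t := ih (V.erase l) hr' hc'
    have hgl : g l = l := hg.1 l (by simp)
    have hdec : dec V r (p :: t) = update g l p := rfl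
    have hf := dec_pf (p :: t) V hr hc
    rw [hdec] at hf
    set f := update g l p with hfdef
    -- image of f over V.erase r equals toFinset (p :: t)
    have himg : (V.erase r).image f = (p :: t).toFinset := by
      have h2 : V.erase r = insert l ((V.erase l).erase r) := by
        rw [Finset.erase_right_comm, Finset.insert_erase (mem_erase.2 ⟨hlr, hlV⟩)]
      rw [h2, Finset.image_insert]
      have h3 : ((V.erase l).erase r).image f = ((V.erase l).erase r).image g := by
        apply Finset.image_congr
        intro x hx
        simp only [Finset.coe_erase, Set.mem_diff] at hx
        refine update_of_ne ?_ _ _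
        simp only [mem_erase, Finset.mem_coe] at hx
        tauto
      rw [h3]
      have h4 : ((V.erase l).erase r).image g = t.toFinset := by
        have h5 := enc_toFinset t.length (V.erase l) g hr' hg hc'.1.symm
        rw [hIH] at h5
        exact h5.symm
      rw [h4, show f l = p from update_self _ _ _, List.toFinset_cons]
    -- hence the picked vertex during encoding is l
    have hS : leaves V r f = V \ insert r (p :: t).toFinset := by
      rw [leaves_eq hf.2.1, himg]
    have hpick : pick (leaves V r f) = l := by rw [hS]
    show f (pick (leaves V r f)) :: enc t.length (V.erase (pick (leaves V r f))) r
        (update f (pick (leaves V r f)) (pick (leaves V r f))) = p :: t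
    rw [hpick]
    have hfl : f l = p := update_self _ _ _
    have hfg : update f l l = g := by
      funext v
      rcases eq_or_ne v l with rfl | hvl
      · rw [update_self, hgl]
      · rw [update_of_ne hvl, hfdef, update_of_ne hvl]
    rw [hfl, hfg, hIH]


/-- counting bounded lists -/
lemma card_lists (V : Finset ℕ) : ∀ m : ℕ,
    Nat.card {l : List ℕ // l.length = m ∧ ∀ x ∈ l, x ∈ V} = V.card ^ m := by
  intro m
  induction m with
  | zero =>
    rw [pow_zero]
    have : ∀ l : {l : List ℕ // l.length = 0 ∧ ∀ x ∈ l, x ∈ V}, l = ⟨[], rfl, by simp⟩ := by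
      rintro ⟨l, hl, _⟩
      apply Subtype.ext
      exact List.length_eq_zero_iff.1 hl
    haveI : Unique {l : List ℕ // l.length = 0 ∧ ∀ x ∈ l, x ∈ V} :=
      ⟨⟨⟨[], rfl, by simp⟩⟩, this⟩
    exact Nat.card_unique
  | succ m ih =>
    have e : {l : List ℕ // l.length = m + 1 ∧ ∀ x ∈ l, x ∈ V} ≃
        ↥V × {l : List ℕ // l.length = m ∧ ∀ x ∈ l, x ∈ V} := by
      refine ⟨fun l => ?_, fun p => ?_, ?_, ?_⟩
      · have hne : l.1 ≠ [] := by
          intro h; have := l.2.1; rw [h] at this; simp at this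
        exact ⟨⟨l.1.head hne, l.2.2 _ (List.head_mem hne)⟩,
          ⟨l.1.tail, by rw [List.length_tail, l.2.1]; rfl,
            fun x hx => l.2.2 x (List.mem_of_mem_tail hx)⟩⟩
      · exact ⟨p.1.1 :: p.2.1, by simp [p.2.2.1], by
          intro x hx
          rcases List.mem_cons.1 hx with rfl | hx
          · exact p.1.2
          · exact p.2.2.2 x hx⟩
      · rintro ⟨l, hl⟩
        apply Subtype.ext
        exact List.cons_head_tail _
      · rintro ⟨⟨a, ha⟩, ⟨t, ht⟩⟩
        rfl
    rw [Nat.card_congr e, Nat.card_prod, ih, pow_succ]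
    rw [Nat.card_eq_fintype_card, Fintype.card_coe]
    ring

lemma card_codes (V : Finset ℕ) (r : ℕ) (hr : r ∈ V) :
    Nat.card {l : List ℕ // IsCode V r l} = V.card ^ (V.card - 2) := by
  have hV1 : 1 ≤ V.card := Finset.card_pos.2 ⟨r, hr⟩
  rcases eq_or_lt_of_le hV1 with h1 | h2
  · -- V.card = 1, only code is []
    have hcode : IsCode V r ([] : List ℕ) := ⟨by simp [← h1], by simp, by simp⟩
    have huniq : ∀ l : {l : List ℕ // IsCode V r l}, l = ⟨[], hcode⟩ := by
      rintro ⟨l, hl⟩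
      have h2 : l.length + 1 = V.card := hl.1
      rw [← h1] at h2
      have h3 : l = [] := List.length_eq_zero_iff.1 (by omega)
      subst h3
      rfl
    haveI : Unique {l : List ℕ // IsCode V r l} := ⟨⟨⟨[], hcode⟩⟩, huniq⟩
    rw [Nat.card_unique, ← h1]
    norm_num
  · -- V.card ≥ 2
    obtain ⟨m, hm⟩ : ∃ m, V.card = m + 2 := ⟨V.card - 2, by omega⟩
    have e : {l : List ℕ // IsCode V r l} ≃
        {l : List ℕ // l.length = m ∧ ∀ x ∈ l, x ∈ V} := by
      refine ⟨fun l => ⟨l.1.dropLast, ?_, ?_⟩, fun l => ⟨l.1 ++ [r], ?_, ?_, ?_⟩, ?_, ?_⟩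
      · rw [List.length_dropLast]
        have := l.2.1; omega
      · intro x hx
        exact l.2.2.1 x (List.dropLast_subset _ hx)
      · simp [l.2.1]; omega
      · intro x hx
        rcases List.mem_append.1 hx with hx | hx
        · exact l.2.2 x hx
        · simp at hx; subst hx; exact hr
      · intro _; exact List.getLast?_concat
      · rintro ⟨l, hl⟩
        apply Subtype.ext
        have hne : l ≠ [] := by
          intro h; have := hl.1; rw [h] at this; simp at this; omega
        exact List.dropLast_append_getLast? r (hl.2.2 hne)
      · rintro ⟨l, hl⟩
        apply Subtype.ext
        exact List.dropLast_concat
    rw [Nat.card_congr e, card_lists, hm]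
    norm_num

/-- the count of parent functions -/
lemma card_pf (V : Finset ℕ) (r : ℕ) (hr : r ∈ V) :
    Nat.card {f : ℕ → ℕ // PF V r f} = V.card ^ (V.card - 2) := by
  have hV1 : 1 ≤ V.card := Finset.card_pos.2 ⟨r, hr⟩
  have hcard : V.card = (V.card - 1) + 1 := by omega
  have e : {f : ℕ → ℕ // PF V r f} ≃ {l : List ℕ // IsCode V r l} := by
    refine ⟨fun f => ⟨enc (V.card - 1) V r f.1, enc_isCode _ _ _ hr f.2 hcard⟩,
      fun l => ⟨dec V r l.1, dec_pf _ _ hr l.2⟩, ?_, ?_⟩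
    · rintro ⟨f, hf⟩
      apply Subtype.ext
      exact dec_enc _ _ _ hr hf hcard
    · rintro ⟨l, hl⟩
      apply Subtype.ext
      have hlen : l.length = V.card - 1 := by have := hl.1; omega
      have h5 := enc_dec l V hr hl
      rw [hlen] at h5
      exact h5
  rw [Nat.card_congr e, card_codes V r hr]


/-! ### Part 3: trees on `Fin n` vs parent functions -/

open SimpleGraph

/-- the graph of a parent function -/
def graphOf (n : ℕ) (f : ℕ → ℕ) : SimpleGraph (Fin n) where
  Adj a b := a ≠ b ∧ (f a.val = b.val ∨ f b.val = a.val)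
  symm := ⟨by
    rintro a b ⟨h1, h2⟩
    exact ⟨h1.symm, h2.symm⟩⟩
  loopless := ⟨fun a h => h.1 rfl⟩

variable {n : ℕ}

lemma reach_z (hn : 1 ≤ n) {f : ℕ → ℕ} (hf : PF (Finset.range n) 0 f) (v : Fin n) :
    (graphOf n f).Reachable v ⟨0, hn⟩ := by
  obtain ⟨k, hk⟩ := hf.2.2.2 v.val (Finset.mem_range.2 v.isLt)
  clear hk
  obtain ⟨k, hk⟩ := hf.2.2.2 v.val (Finset.mem_range.2 v.isLt)
  induction k generalizing v with
  | zero =>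
    have : v = ⟨0, hn⟩ := Fin.ext hk
    rw [this]
  | succ k ih =>
    by_cases h0 : v.val = 0
    · have : v = ⟨0, hn⟩ := Fin.ext h0
      rw [this]
    · have hvm : v.val ∈ Finset.range n := Finset.mem_range.2 v.isLt
      have hfv : f v.val ∈ Finset.range n := hf.2.2.1 _ hvm
      set b : Fin n := ⟨f v.val, Finset.mem_range.1 hfv⟩ with hb
      have hadj : (graphOf n f).Adj v b :=
        ⟨fun h => hf.ne_self hvm h0 (congrArg Fin.val h).symm, Or.inl rfl⟩
      have hkb : f^[k] b.val = 0 := by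
        rw [hb]
        rw [Function.iterate_succ_apply] at hk
        exact hk
      exact hadj.reachable.trans (ih b hkb)

lemma graphOf_connected (hn : 1 ≤ n) {f : ℕ → ℕ} (hf : PF (Finset.range n) 0 f) :
    (graphOf n f).Connected := by
  haveI : Nonempty (Fin n) := ⟨⟨0, hn⟩⟩
  exact ⟨fun u v => (reach_z hn hf u).trans (reach_z hn hf v).symm⟩

lemma graphOf_bridge (hn : 1 ≤ n) {f : ℕ → ℕ} (hf : PF (Finset.range n) 0 f) {a b : Fin n}
    (hab : a ≠ b) (hfab : f a.val = b.val) :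
    ¬(graphOf n f \ fromEdgeSet {s(a, b)}).Reachable a b := by
  set S : Set (Fin n) := {x | ∃ k, f^[k] x.val = a.val} with hS
  have haS : a ∈ S := ⟨0, rfl⟩
  have ha0 : a.val ≠ 0 := by
    intro h0
    apply hab
    apply Fin.ext
    rw [← hfab, h0, hf.2.1]
  have hbS : b ∉ S := by
    rintro ⟨k, hk⟩
    have hcyc : f^[k + 1] a.val = a.val := by
      rw [Function.iterate_succ_apply, hfab]
      exact hk
    exact ha0 (hf.no_cycle (Finset.mem_range.2 a.isLt) hcyc)
  have key : ∀ x y : Fin n, f x.val = y.val → s(x, y) ≠ s(a, b) → (x ∈ S ↔ y ∈ S) := by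
    intro x y hfx hne
    have hxa : x ≠ a := by
      rintro rfl
      exact hne (by rw [show y = b from Fin.ext (by rw [← hfx, hfab])])
    constructor
    · rintro ⟨k, hk⟩
      cases k with
      | zero => exact absurd (Fin.ext hk) hxa
      | succ k =>
        rw [Function.iterate_succ_apply, hfx] at hk
        exact ⟨k, hk⟩
    · rintro ⟨k, hk⟩
      exact ⟨k + 1, by rw [Function.iterate_succ_apply, hfx]; exact hk⟩
  intro hreach
  have hstep : ∀ x y : Fin n, (graphOf n f \ fromEdgeSet {s(a, b)}).Adj x y → (x ∈ S ↔ y ∈ S) := by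
    intro x y hxy
    rw [sdiff_adj] at hxy
    obtain ⟨hG, hdel⟩ := hxy
    have hne : s(x, y) ≠ s(a, b) := by
      intro h
      apply hdel
      rw [fromEdgeSet_adj]
      exact ⟨by rw [h]; rfl, hG.1⟩
    rcases hG.2 with hfx | hfy
    · exact key x y hfx hne
    · refine (key y x hfy ?_).symm
      intro h
      exact hne (by rw [← h, Sym2.eq_swap])
  have hwalk : ∀ {x y : Fin n} (_ : (graphOf n f \ fromEdgeSet {s(a, b)}).Walk x y),
      x ∈ S ↔ y ∈ S := by
    intro x y w
    induction w with
    | nil => exact Iff.rfl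
    | cons h p ih => exact (hstep _ _ h).trans ih
  obtain ⟨w⟩ := hreach
  exact hbS ((hwalk w).1 haS)

lemma graphOf_acyclic (hn : 1 ≤ n) {f : ℕ → ℕ} (hf : PF (Finset.range n) 0 f) :
    (graphOf n f).IsAcyclic := by
  rw [isAcyclic_iff_forall_adj_isBridge]
  intro x y hxy
  rcases hxy.2 with hfx | hfy
  · exact isBridge_iff.2 (graphOf_bridge hn hf hxy.1 hfx)
  · have hb : (graphOf n f).IsBridge s(y, x) :=
      isBridge_iff.2 (graphOf_bridge hn hf (Ne.symm hxy.1) hfy)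
    rwa [Sym2.eq_swap] at hb

lemma graphOf_isTree (hn : 1 ≤ n) {f : ℕ → ℕ} (hf : PF (Finset.range n) 0 f) :
    (graphOf n f).IsTree :=
  ⟨graphOf_connected hn hf, graphOf_acyclic hn hf⟩


/-- the chosen path from `v` to the root in a tree -/
noncomputable def rpath {T : SimpleGraph (Fin n)} (hT : T.IsTree) (hn : 1 ≤ n) (v : Fin n) :
    T.Walk v ⟨0, hn⟩ :=
  (hT.existsUnique_path v ⟨0, hn⟩).exists.choose

lemma rpath_isPath {T : SimpleGraph (Fin n)} (hT : T.IsTree) (hn : 1 ≤ n) (v : Fin n) :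
    (rpath hT hn v).IsPath :=
  (hT.existsUnique_path v ⟨0, hn⟩).exists.choose_spec

lemma rpath_unique {T : SimpleGraph (Fin n)} (hT : T.IsTree) (hn : 1 ≤ n) {v : Fin n}
    {p : T.Walk v ⟨0, hn⟩} (hp : p.IsPath) : p = rpath hT hn v :=
  (hT.existsUnique_path v ⟨0, hn⟩).unique hp (rpath_isPath hT hn v)

/-- the parent function of a tree -/
noncomputable def fOf {T : SimpleGraph (Fin n)} (hT : T.IsTree) (hn : 1 ≤ n) : ℕ → ℕ :=
  fun x => if h : x < n then ((rpath hT hn ⟨x, h⟩).getVert 1).val else x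

lemma rpath_zero {T : SimpleGraph (Fin n)} (hT : T.IsTree) (hn : 1 ≤ n) :
    rpath hT hn ⟨0, hn⟩ = SimpleGraph.Walk.nil :=
  (SimpleGraph.Walk.isPath_iff_eq_nil.1 (rpath_isPath hT hn ⟨0, hn⟩))

lemma fOf_zero {T : SimpleGraph (Fin n)} (hT : T.IsTree) (hn : 1 ≤ n) : fOf hT hn 0 = 0 := by
  simp only [fOf]
  rw [dif_pos (show (0:ℕ) < n from hn), rpath_zero hT hn]
  rfl

lemma rpath_tail {T : SimpleGraph (Fin n)} (hT : T.IsTree) (hn : 1 ≤ n) {v : Fin n}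
    (hv : v ≠ ⟨0, hn⟩) :
    (rpath hT hn ((rpath hT hn v).getVert 1)).length + 1 = (rpath hT hn v).length := by
  have hnil : ¬(rpath hT hn v).Nil := SimpleGraph.Walk.not_nil_of_ne hv
  have htail : (rpath hT hn v).tail = rpath hT hn ((rpath hT hn v).getVert 1) :=
    rpath_unique hT hn ((rpath_isPath hT hn v).tail)
  rw [← htail]
  exact SimpleGraph.Walk.length_tail_add_one hnil

lemma fOf_pf {T : SimpleGraph (Fin n)} (hT : T.IsTree) (hn : 1 ≤ n) :
    PF (Finset.range n) 0 (fOf hT hn) := by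
  refine ⟨?_, fOf_zero hT hn, ?_, ?_⟩
  · intro v hv
    rw [Finset.mem_range] at hv
    rw [fOf, dif_neg hv]
  · intro v hv
    rw [Finset.mem_range] at hv
    rw [fOf, dif_pos hv]
    exact Finset.mem_range.2 (Fin.isLt _)
  · intro v hv
    rw [Finset.mem_range] at hv
    suffices H : ∀ (L : ℕ) (u : Fin n), (rpath hT hn u).length ≤ L →
        ∃ k, (fOf hT hn)^[k] u.val = 0 by
      obtain ⟨k, hk⟩ := H (rpath hT hn ⟨v, hv⟩).length ⟨v, hv⟩ le_rfl
      exact ⟨k, hk⟩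
    intro L
    induction L with
    | zero =>
      intro u hu
      have h0 : (rpath hT hn u).length = 0 := Nat.le_zero.1 hu
      have : u = ⟨0, hn⟩ := SimpleGraph.Walk.eq_of_length_eq_zero h0
      exact ⟨0, by rw [this]; rfl⟩
    | succ L ih =>
      intro u hu
      by_cases h0 : u = ⟨0, hn⟩
      · exact ⟨0, by rw [h0]; rfl⟩
      · set b : Fin n := (rpath hT hn u).getVert 1 with hb
        have hlen : (rpath hT hn b).length + 1 = (rpath hT hn u).length := rpath_tail hT hn h0
        obtain ⟨k, hk⟩ := ih b (by omega)
        refine ⟨k + 1, ?_⟩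
        rw [Function.iterate_succ_apply]
        have hfu : fOf hT hn u.val = b.val := by
          rw [fOf, dif_pos u.isLt, Fin.eta]
        rw [hfu]
        exact hk

/-- helper: an edge of a path incident to its first vertex is the first edge -/
lemma first_edge {T : SimpleGraph (Fin n)} {v w u : Fin n} {p : T.Walk v w} (hp : p.IsPath)
    (he : s(v, u) ∈ p.edges) : p.getVert 1 = u := by
  cases p with
  | nil => simp at he
  | cons h q =>
    rw [SimpleGraph.Walk.edges_cons] at he
    rcases List.mem_cons.1 he with heq | hmem
    · rw [Sym2.eq_iff] at heq
      rcases heq with ⟨-, rfl⟩ | ⟨h1, h2⟩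
      · simp
      · exact absurd h1 h.ne
    · exfalso
      have : v ∈ q.support := SimpleGraph.Walk.fst_mem_support_of_mem_edges q hmem
      rw [SimpleGraph.Walk.cons_isPath_iff] at hp
      exact hp.2 this

lemma graphOf_fOf {T : SimpleGraph (Fin n)} (hT : T.IsTree) (hn : 1 ≤ n) :
    graphOf n (fOf hT hn) = T := by
  ext a b
  show a ≠ b ∧ (fOf hT hn a.val = b.val ∨ fOf hT hn b.val = a.val) ↔ T.Adj a b
  constructor
  · rintro ⟨hne, hab | hba⟩
    · -- fOf a = b
      have ha0 : a ≠ ⟨0, hn⟩ := by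
        rintro rfl
        rw [show (⟨0, hn⟩ : Fin n).val = 0 from rfl, fOf_zero hT hn] at hab
        exact hne (Fin.ext hab)
      have hnil : ¬(rpath hT hn a).Nil := SimpleGraph.Walk.not_nil_of_ne ha0
      have hadj : T.Adj a ((rpath hT hn a).getVert 1) := SimpleGraph.Walk.adj_snd hnil
      have hb : (rpath hT hn a).getVert 1 = b := by
        apply Fin.ext
        rw [← hab, fOf, dif_pos a.isLt, Fin.eta]
      rwa [hb] at hadj
    · have hb0 : b ≠ ⟨0, hn⟩ := by
        rintro rfl
        rw [show (⟨0, hn⟩ : Fin n).val = 0 from rfl, fOf_zero hT hn] at hba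
        exact hne (Fin.ext hba.symm)
      have hnil : ¬(rpath hT hn b).Nil := SimpleGraph.Walk.not_nil_of_ne hb0
      have hadj : T.Adj b ((rpath hT hn b).getVert 1) := SimpleGraph.Walk.adj_snd hnil
      have ha : (rpath hT hn b).getVert 1 = a := by
        apply Fin.ext
        rw [← hba, fOf, dif_pos b.isLt, Fin.eta]
      rw [ha] at hadj
      exact hadj.symm
  · intro hadj
    have hbr : T.IsBridge s(a, b) := isAcyclic_iff_forall_adj_isBridge.1 hT.2 hadj
    rw [isBridge_iff] at hbr
    have hedge : s(a, b) ∈ (rpath hT hn a).edges ∨ s(a, b) ∈ (rpath hT hn b).edges := by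
      by_contra hcon
      push_neg at hcon
      apply hbr
      rw [reachable_delete_edges_iff_exists_walk]
      refine ⟨(rpath hT hn a).append (rpath hT hn b).reverse, ?_⟩
      rw [SimpleGraph.Walk.edges_append, SimpleGraph.Walk.edges_reverse]
      intro hmem
      rcases List.mem_append.1 hmem with h | h
      · exact hcon.1 h
      · exact hcon.2 (List.mem_reverse.1 h)
    refine ⟨hadj.ne, ?_⟩
    rcases hedge with h | h
    · left
      have := first_edge (rpath_isPath hT hn a) h
      rw [fOf, dif_pos a.isLt, Fin.eta, this]
    · right
      rw [Sym2.eq_swap] at h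
      have := first_edge (rpath_isPath hT hn b) h
      rw [fOf, dif_pos b.isLt, Fin.eta, this]


/-- the canonical walk from `v` to the root following a parent function -/
noncomputable def wkAux (hn : 1 ≤ n) {f : ℕ → ℕ} (hf : PF (Finset.range n) 0 f) :
    (k : ℕ) → (v : Fin n) → f^[k] v.val = 0 → (graphOf n f).Walk v ⟨0, hn⟩
  | 0, v, h => (SimpleGraph.Walk.nil : (graphOf n f).Walk v v).copy rfl (Fin.ext h)
  | k + 1, v, h =>
    if h0 : v = ⟨0, hn⟩ then (SimpleGraph.Walk.nil : (graphOf n f).Walk v v).copy rfl h0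
    else
      SimpleGraph.Walk.cons
        (show (graphOf n f).Adj v ⟨f v.val, Finset.mem_range.1
            (hf.2.2.1 v.val (Finset.mem_range.2 v.isLt))⟩ from
          ⟨fun hcon => hf.ne_self (Finset.mem_range.2 v.isLt)
              (fun hv0 => h0 (Fin.ext hv0)) (congrArg Fin.val hcon).symm,
            Or.inl rfl⟩)
        (wkAux hn hf k ⟨f v.val, Finset.mem_range.1
            (hf.2.2.1 v.val (Finset.mem_range.2 v.isLt))⟩
          (by rw [← Function.iterate_succ_apply]; exact h))

lemma wkAux_good (hn : 1 ≤ n) {f : ℕ → ℕ} (hf : PF (Finset.range n) 0 f) :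
    ∀ (k : ℕ) (v : Fin n) (h : f^[k] v.val = 0),
      (wkAux hn hf k v h).IsPath ∧
        ∀ u ∈ (wkAux hn hf k v h).support, dep f 0 u.val ≤ dep f 0 v.val := by
  intro k
  induction k with
  | zero =>
    intro v h
    constructor
    · rw [wkAux]
      simp
    · intro u hu
      rw [wkAux, SimpleGraph.Walk.support_copy, SimpleGraph.Walk.support_nil] at hu
      simp at hu
      rw [hu]
  | succ k ih =>
    intro v h
    by_cases h0 : v = ⟨0, hn⟩
    · constructor
      · rw [wkAux, dif_pos h0]
        simp
      · intro u hu
        rw [wkAux, dif_pos h0, SimpleGraph.Walk.support_copy,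
          SimpleGraph.Walk.support_nil] at hu
        simp at hu
        rw [hu]
    · have hv0 : v.val ≠ 0 := fun hv0 => h0 (Fin.ext hv0)
      have hvm : v.val ∈ Finset.range n := Finset.mem_range.2 v.isLt
      have hdep : dep f 0 v.val = dep f 0 (f v.val) + 1 := dep_step hf hvm hv0
      have hb : f^[k] (f v.val) = 0 := by
        rw [← Function.iterate_succ_apply]; exact h
      obtain ⟨hpath, hsupp⟩ := ih ⟨f v.val, Finset.mem_range.1 (hf.2.2.1 v.val hvm)⟩ hb
      simp only [Fin.val_mk] at hsupp
      constructor
      · rw [wkAux, dif_neg h0, SimpleGraph.Walk.cons_isPath_iff]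
        refine ⟨hpath, fun hcon => ?_⟩
        have := hsupp v hcon
        omega
      · intro u hu
        rw [wkAux, dif_neg h0, SimpleGraph.Walk.support_cons] at hu
        rcases List.mem_cons.1 hu with rfl | hu
        · exact le_rfl
        · have := hsupp u hu
          omega

lemma fOf_graphOf (hn : 1 ≤ n) {f : ℕ → ℕ} (hf : PF (Finset.range n) 0 f) :
    fOf (graphOf_isTree hn hf) hn = f := by
  funext x
  by_cases hx : x < n
  · by_cases hx0 : x = 0
    · rw [hx0, fOf_zero, hf.2.1]
    · set v : Fin n := ⟨x, hx⟩ with hvdef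
      have hv0 : v ≠ ⟨0, hn⟩ := fun hcon => hx0 (congrArg Fin.val hcon)
      obtain ⟨k, hk⟩ := hf.2.2.2 x (Finset.mem_range.2 hx)
      have hk' : f^[k + 1] v.val = 0 := by
        rw [Function.iterate_succ_apply']
        rw [show f^[k] v.val = 0 from hk, hf.2.1]
      set w := wkAux hn hf (k + 1) v hk' with hw
      have hwp : w.IsPath := (wkAux_good hn hf (k + 1) v hk').1
      have hweq : w = rpath (graphOf_isTree hn hf) hn v :=
        rpath_unique (graphOf_isTree hn hf) hn hwp
      have hsnd : w.getVert 1 = ⟨f v.val, Finset.mem_range.1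
          (hf.2.2.1 v.val (Finset.mem_range.2 v.isLt))⟩ := by
        rw [hw, wkAux, dif_neg hv0]
        rw [SimpleGraph.Walk.getVert_cons_succ, SimpleGraph.Walk.getVert_zero]
      show fOf (graphOf_isTree hn hf) hn x = f x
      rw [fOf, dif_pos hx]
      rw [show (⟨x, hx⟩ : Fin n) = v from rfl, ← hweq, hsnd]
  · simp only [fOf]
    rw [dif_neg hx]
    exact (hf.1 x (by rw [Finset.mem_range]; omega)).symm

/-- the tree/parent-function correspondence -/
noncomputable def treeEquiv (hn : 1 ≤ n) :
    {T : SimpleGraph (Fin n) // T.IsTree} ≃ {f : ℕ → ℕ // PF (Finset.range n) 0 f} where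
  toFun := fun T => ⟨fOf T.2 hn, fOf_pf T.2 hn⟩
  invFun := fun f => ⟨graphOf n f.1, graphOf_isTree hn f.2⟩
  left_inv := fun T => Subtype.ext (graphOf_fOf T.2 hn)
  right_inv := fun f => Subtype.ext (fOf_graphOf hn f.2)

end Cayley

/-- Cayley's formula: the number of labelled trees on `n ≥ 1` vertices is `n ^ (n - 2)`. -/
theorem cayley_formula (n : ℕ) (hn : 1 ≤ n) :
    Nat.card {T : SimpleGraph (Fin n) // T.IsTree} = n ^ (n - 2) := by
  rw [Nat.card_congr (Cayley.treeEquiv hn)]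
  have h0 : (0 : ℕ) ∈ Finset.range n := Finset.mem_range.2 hn
  have := Cayley.card_pf (Finset.range n) 0 h0
  rwa [Finset.card_range] at this
end

section
/- Among all forests F in K_n with exactly ℓ edges, the number of spanning trees of K_n containing F is maximized when F is a matching of ℓ disjoint edges; i.e., for any forest F' with ℓ edges, the number of spanning trees containing F' is at most 2^ℓ · n^(n-2-ℓ). -/
namespace TreeCnt
variable {n : ℕ}

/-- Rooted forest as parent function: every orbit eventually fixed. -/
def IsRF (p : Fin n → Fin n) : Prop := ∀ v, ∃ k, p (p^[k] v) = p^[k] v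

def rootsF (p : Fin n → Fin n) : Finset (Fin n) := Finset.univ.filter (fun v => p v = v)

def IsTreeF (p : Fin n → Fin n) : Prop := IsRF p ∧ (rootsF p).card = 1

def Ext (p₀ p : Fin n → Fin n) : Prop := ∀ v, p₀ v ≠ v → p v = p₀ v

def Sub (q p : Fin n → Fin n) : Prop := ∀ v, q v = v ∨ q v = p v

lemma mem_rootsF {p : Fin n → Fin n} {v : Fin n} : v ∈ rootsF p ↔ p v = v := by
  simp [rootsF]

lemma iterate_fixed' {p : Fin n → Fin n} {v : Fin n} (h : p v = v) (k : ℕ) : p^[k] v = v :=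
  Function.iterate_fixed h k

/-- once an iterate is fixed, later iterates equal it -/
lemma iterate_stab {p : Fin n → Fin n} {v : Fin n} {K : ℕ} (h : p (p^[K] v) = p^[K] v)
    {j : ℕ} (hj : K ≤ j) : p^[j] v = p^[K] v := by
  obtain ⟨d, rfl⟩ := Nat.exists_eq_add_of_le hj
  rw [Nat.add_comm, Function.iterate_add_apply]
  exact iterate_fixed' h d

lemma IsRF.sub {p q : Fin n → Fin n} (hp : IsRF p) (hq : Sub q p) : IsRF q := by
  intro v
  obtain ⟨K, hK⟩ := hp v
  -- strong induction on least fixing time of p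
  have main : ∀ K, ∀ v : Fin n, p (p^[K] v) = p^[K] v → ∃ k, q (q^[k] v) = q^[k] v := by
    intro K
    induction K with
    | zero => intro v hv
              rcases hq v with h | h
              · exact ⟨0, h⟩
              · exact ⟨0, by simpa [h] using hv⟩
    | succ K ih =>
        intro v hv
        rcases hq v with h | h
        · exact ⟨0, h⟩
        · by_cases hfix : p v = v
          · exact ⟨0, by simp [h, hfix]⟩
          · have : p (p^[K] (p v)) = p^[K] (p v) := by
              rw [← Function.iterate_succ_apply]
              exact hv
            obtain ⟨k, hk⟩ := ih (p v) this
            exact ⟨k + 1, by rw [Function.iterate_add_apply]; simpa [h] using hk⟩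
  exact main K v hK

lemma IsRF.periodic_fixed {p : Fin n → Fin n} (hp : IsRF p) {v : Fin n} {j : ℕ}
    (hj : 1 ≤ j) (hper : p^[j] v = v) : p v = v := by
  obtain ⟨K, hK⟩ := hp v
  have hmul : ∀ m : ℕ, p^[j * m] v = v := by
    intro m
    induction m with
    | zero => simp
    | succ m ih => rw [Nat.mul_succ, Function.iterate_add_apply, hper, ih]
  have hKle : K ≤ j * K + j := by nlinarith
  have h1 : p^[j * (K+1)] v = p^[K] v := iterate_stab hK (by nlinarith)
  have h2 : p^[j * (K+1)] v = v := hmul (K+1)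
  have : p^[K] v = v := by rw [← h1, h2]
  calc p v = p (p^[K] v) := by rw [this]
    _ = p^[K] v := hK
    _ = v := this

lemma IsRF.no_two_cycle {p : Fin n → Fin n} (hp : IsRF p) {a b : Fin n}
    (h1 : p a = b) (h2 : p b = a) : a = b := by
  have : p^[2] a = a := by simp [Function.iterate_succ_apply, h1, h2]
  have := hp.periodic_fixed (by norm_num) this
  rw [h1] at this; exact this.symm

/-- orbit of a subfunction is a lazy orbit -/
lemma Sub.iterate_eq {q p : Fin n → Fin n} (h : Sub q p) (v : Fin n) (j : ℕ) :
    ∃ c, q^[j] v = p^[c] v := by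
  induction j with
  | zero => exact ⟨0, rfl⟩
  | succ j ih =>
      obtain ⟨c, hc⟩ := ih
      rcases h (q^[j] v) with h' | h'
      · exact ⟨c, by rw [Function.iterate_succ_apply', h', hc]⟩
      · refine ⟨c + 1, ?_⟩
        rw [Function.iterate_succ_apply', h', hc]
        exact (Function.iterate_succ_apply' p c v).symm


def rootAux (p₀ : Fin n → Fin n) (h₀ : IsRF p₀) (v : Fin n) : Fin n :=
  p₀^[Nat.find (h₀ v)] v

lemma rootAux_mem (p₀ : Fin n → Fin n) (h₀ : IsRF p₀) (v : Fin n) :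
    rootAux p₀ h₀ v ∈ rootsF p₀ := mem_rootsF.2 (Nat.find_spec (h₀ v))

lemma roots_subset {p₀ p : Fin n → Fin n} (hE : Ext p₀ p) : rootsF p ⊆ rootsF p₀ := by
  intro v hv
  rw [mem_rootsF] at hv ⊢
  by_contra h
  exact h (by rw [← hE v h, hv])

lemma pitman : ∀ (k : ℕ) (p₀ : Fin n → Fin n), IsRF p₀ → (rootsF p₀).card = k →
    Nat.card {p : Fin n → Fin n // IsTreeF p ∧ Ext p₀ p} ≤ n ^ (k - 1) := by
  intro k
  induction k with
  | zero =>
      intro p₀ h₀ hcard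
      have : IsEmpty {p : Fin n → Fin n // IsTreeF p ∧ Ext p₀ p} := by
        constructor
        rintro ⟨p, ⟨hRF, hc1⟩, hE⟩
        have h1 : (rootsF p).Nonempty := Finset.card_pos.1 (by omega)
        obtain ⟨r, hr⟩ := h1
        have := roots_subset hE hr
        simp [Finset.card_eq_zero.1 hcard] at this
      simp [Nat.card_of_isEmpty]
  | succ k ih =>
      intro p₀ h₀ hcard
      rcases Nat.eq_zero_or_pos k with rfl | hk
      · -- k + 1 = 1 : subsingleton
        obtain ⟨s₀, hs₀⟩ := Finset.card_eq_one.1 hcard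
        have : Subsingleton {p : Fin n → Fin n // IsTreeF p ∧ Ext p₀ p} := by
          constructor
          rintro ⟨p, ⟨hRF, hc1⟩, hE⟩ ⟨q, ⟨hRF', hc1'⟩, hE'⟩
          have hroots : ∀ (r : Fin n → Fin n), IsTreeF r → Ext p₀ r → rootsF r = {s₀} := by
            intro r hr hEr
            refine Finset.eq_of_subset_of_card_le (hs₀ ▸ roots_subset hEr) ?_
            simp [hr.2]
          have key : ∀ v, p v = q v := by
            intro v
            by_cases hv : p₀ v = v
            · have hvs : v = s₀ := by
                have : v ∈ rootsF p₀ := mem_rootsF.2 hv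
                simpa [hs₀] using this
              have h1 : p v = v := by
                have : v ∈ rootsF p := by
                  rw [hroots p ⟨hRF, hc1⟩ hE, hvs]; simp
                exact mem_rootsF.1 this
              have h2 : q v = v := by
                have : v ∈ rootsF q := by
                  rw [hroots q ⟨hRF', hc1'⟩ hE', hvs]; simp
                exact mem_rootsF.1 this
              rw [h1, h2]
            · rw [hE v hv, hE' v hv]
          exact Subtype.ext (funext key)
        calc Nat.card _ ≤ 1 := Finite.card_le_one_iff_subsingleton.2 this
          _ ≤ n ^ (0 + 1 - 1) := Nat.one_le_iff_ne_zero.2 (by simp)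
      · -- main step, k ≥ 1
        set α := {p : Fin n → Fin n // IsTreeF p ∧ Ext p₀ p} with hα
        -- basic facts about elements of α
        have hsub : ∀ x : α, Sub p₀ x.1 := by
          rintro ⟨p, hp, hE⟩ v
          by_cases h : p₀ v = v
          · exact Or.inl h
          · exact Or.inr (hE v h).symm
        have hAcard : ∀ x : α, (rootsF p₀ \ rootsF x.1).card = k := by
          rintro ⟨p, hp, hE⟩
          rw [Finset.card_sdiff_of_subset (roots_subset hE), hcard, hp.2]
          omega
        have hBcard : ∀ v : Fin n, ((rootsF p₀).erase (rootAux p₀ h₀ v)).card = k := by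
          intro v
          rw [Finset.card_erase_of_mem (rootAux_mem p₀ h₀ v), hcard]
          omega
        -- the chosen non-root s and its image v
        let sOf : ∀ (x : α), Fin k → Fin n := fun x i =>
          ((rootsF p₀ \ rootsF x.1).orderIsoOfFin (hAcard x) i : Fin n)
        have hs_mem : ∀ x i, sOf x i ∈ rootsF p₀ \ rootsF x.1 := fun x i =>
          ((rootsF p₀ \ rootsF x.1).orderIsoOfFin (hAcard x) i).2
        have hs_root : ∀ x i, p₀ (sOf x i) = sOf x i := by
          intro x i
          have := (Finset.mem_sdiff.1 (hs_mem x i)).1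
          exact mem_rootsF.1 this
        have hs_nroot : ∀ x i, x.1 (sOf x i) ≠ sOf x i := by
          intro x i
          have := (Finset.mem_sdiff.1 (hs_mem x i)).2
          exact fun h => this (mem_rootsF.2 h)
        let vOf : ∀ (x : α), Fin k → Fin n := fun x i => x.1 (sOf x i)
        -- key acyclicity: the p₀-root of v is not s
        have hkey : ∀ x i, rootAux p₀ h₀ (vOf x i) ≠ sOf x i := by
          intro x i hcon
          obtain ⟨c, hc⟩ := (hsub x).iterate_eq (vOf x i) (Nat.find (h₀ (vOf x i)))
          rw [rootAux] at hcon
          rw [hcon] at hc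
          have : x.1^[c+1] (sOf x i) = sOf x i := by
            rw [Function.iterate_succ_apply]
            exact hc.symm
          have := x.2.1.1.periodic_fixed (by omega) this
          exact hs_nroot x i this
        have hs_in_B : ∀ x i, sOf x i ∈ (rootsF p₀).erase (rootAux p₀ h₀ (vOf x i)) :=
          fun x i => Finset.mem_erase.2 ⟨fun h => hkey x i (by rw [h]),
            (Finset.mem_sdiff.1 (hs_mem x i)).1⟩
        -- the updated forest
        let p1Of : ∀ (x : α), Fin k → (Fin n → Fin n) := fun x i =>
          Function.update p₀ (sOf x i) (vOf x i)
        have hp1sub : ∀ x i, Sub (p1Of x i) x.1 := by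
          intro x i w
          by_cases hw : w = sOf x i
          · subst hw
            right
            simp [p1Of, Function.update_self, vOf]
          · have : p1Of x i w = p₀ w := Function.update_of_ne hw _ _
            rw [this]
            exact hsub x w
        have hp1RF : ∀ x i, IsRF (p1Of x i) := fun x i => x.2.1.1.sub (hp1sub x i)
        have hp1roots : ∀ x i, rootsF (p1Of x i) = (rootsF p₀).erase (sOf x i) := by
          intro x i
          ext w
          rw [mem_rootsF, Finset.mem_erase, mem_rootsF]
          by_cases hw : w = sOf x i
          · subst hw
            simp only [p1Of, Function.update_self]
            constructor
            · intro h; exact absurd h (hs_nroot x i)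
            · rintro ⟨h, -⟩; exact absurd rfl h
          · have : p1Of x i w = p₀ w := Function.update_of_ne hw _ _
            rw [this]
            exact ⟨fun h => ⟨hw, h⟩, fun h => h.2⟩
        have hp1card : ∀ x i, (rootsF (p1Of x i)).card = k := by
          intro x i
          rw [hp1roots x i, Finset.card_erase_of_mem (Finset.mem_sdiff.1 (hs_mem x i)).1, hcard]
          omega
        have hmem2 : ∀ x i, IsTreeF x.1 ∧ Ext (p1Of x i) x.1 := by
          intro x i
          refine ⟨x.2.1, ?_⟩
          intro w hw
          by_cases hws : w = sOf x i
          · subst hws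
            simp [p1Of, Function.update_self, vOf]
          · have h1 : p1Of x i w = p₀ w := Function.update_of_ne hws _ _
            rw [h1] at hw ⊢
            exact x.2.2 w hw
        -- decoding function for the second component
        let sDec : Fin n → Fin k → Fin n := fun v j =>
          ((((rootsF p₀).erase (rootAux p₀ h₀ v)).orderIsoOfFin (hBcard v)) j : Fin n)
        -- the two-component code map
        let g : α × Fin k → Fin n × Fin k := fun z =>
          ⟨vOf z.1 z.2,
           (((rootsF p₀).erase (rootAux p₀ h₀ (vOf z.1 z.2))).orderIsoOfFin
              (hBcard _)).symm ⟨sOf z.1 z.2, hs_in_B z.1 z.2⟩⟩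
        have hdec : ∀ (x : α) (i : Fin k),
            sDec (g (x, i)).1 (g (x, i)).2 = sOf x i := by
          intro x i
          show ((((rootsF p₀).erase (rootAux p₀ h₀ (vOf x i))).orderIsoOfFin (hBcard _))
            ((((rootsF p₀).erase (rootAux p₀ h₀ (vOf x i))).orderIsoOfFin (hBcard _)).symm
              ⟨sOf x i, hs_in_B x i⟩) : Fin n) = sOf x i
          rw [OrderIso.apply_symm_apply]
        -- each fiber of g has at most n^(k-1) elements
        have fiber_bound : ∀ y : Fin n × Fin k,
            Nat.card {z : α × Fin k // g z = y} ≤ n ^ (k - 1) := by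
          rintro ⟨v, jj⟩
          rcases isEmpty_or_nonempty {z : α × Fin k // g z = (v, jj)} with hE | hNE
          · simp [Nat.card_of_isEmpty]
          · obtain ⟨⟨⟨x₀, i₀⟩, hz₀⟩⟩ := hNE
            set q : Fin n → Fin n := Function.update p₀ (sDec v jj) v with hq_def
            have hsv : ∀ (x : α) (i : Fin k), g (x, i) = (v, jj) →
                sOf x i = sDec v jj ∧ vOf x i = v := by
              intro x i hg
              have h1 := hdec x i
              rw [hg] at h1
              exact ⟨h1.symm, congrArg Prod.fst hg⟩
            have hq0 : q = p1Of x₀ i₀ := by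
              obtain ⟨hs0, hv0⟩ := hsv x₀ i₀ hz₀
              rw [hq_def, ← hs0, ← hv0]
            have hqz : ∀ (x : α) (i : Fin k), g (x, i) = (v, jj) → q = p1Of x i := by
              intro x i hg
              obtain ⟨hs0, hv0⟩ := hsv x i hg
              rw [hq_def, ← hs0, ← hv0]
            -- the fiber maps injectively into the trees extending q
            have hmapmem : ∀ z : {z : α × Fin k // g z = (v, jj)},
                IsTreeF z.1.1.1 ∧ Ext q z.1.1.1 := by
              rintro ⟨⟨x, i⟩, hz⟩
              have := hmem2 x i
              rw [← hqz x i hz] at this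
              exact this
            have hinj : Function.Injective
                (fun z : {z : α × Fin k // g z = (v, jj)} =>
                  (⟨z.1.1.1, hmapmem z⟩ : {p : Fin n → Fin n // IsTreeF p ∧ Ext q p})) := by
              rintro ⟨⟨x, i⟩, hz⟩ ⟨⟨x', i'⟩, hz'⟩ hF
              have hxx : x = x' := by
                have := congrArg Subtype.val hF
                exact Subtype.ext this
              subst hxx
              have hii : i = i' := by
                have e1 := (hsv x i hz).1
                have e2 := (hsv x i' hz').1
                have : sOf x i = sOf x i' := by rw [e1, e2]
                have hiso := Subtype.coe_injective
                  (a₁ := ((rootsF p₀ \ rootsF x.1).orderIsoOfFin (hAcard x)) i)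
                  (a₂ := ((rootsF p₀ \ rootsF x.1).orderIsoOfFin (hAcard x)) i') this
                exact ((rootsF p₀ \ rootsF x.1).orderIsoOfFin (hAcard x)).injective hiso
              subst hii
              rfl
            have hRFq : IsRF q := by rw [hq0]; exact hp1RF x₀ i₀
            have hcardq : (rootsF q).card = k := by rw [hq0]; exact hp1card x₀ i₀
            calc Nat.card {z : α × Fin k // g z = (v, jj)}
                ≤ Nat.card {p : Fin n → Fin n // IsTreeF p ∧ Ext q p} :=
                  Nat.card_le_card_of_injective _ hinj
              _ ≤ n ^ (k - 1) := ih q hRFq hcardq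
        -- sum over fibers
        classical
        letI : Fintype α := Fintype.ofFinite α
        have hcards : Nat.card (α × Fin k) = ∑ y : Fin n × Fin k,
            Nat.card {z : α × Fin k // g z = y} := by
          rw [← Nat.card_congr (Equiv.sigmaFiberEquiv g)]
          rw [Nat.card_eq_fintype_card, Fintype.card_sigma]
          simp [Nat.card_eq_fintype_card]
        have hsum : Nat.card (α × Fin k) ≤ (n * k) * n ^ (k - 1) := by
          rw [hcards]
          calc ∑ y : Fin n × Fin k, Nat.card {z : α × Fin k // g z = y}
              ≤ (Finset.univ : Finset (Fin n × Fin k)).card * n ^ (k - 1) := by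
                rw [← smul_eq_mul]
                exact Finset.sum_le_card_nsmul _ _ _ (fun y _ => fiber_bound y)
            _ = (n * k) * n ^ (k - 1) := by simp [Fintype.card_prod]
        have hprod : Nat.card (α × Fin k) = Nat.card α * k := by
          rw [Nat.card_prod]
          simp
        have hfin : Nat.card α * k ≤ n ^ k * k := by
          rw [← hprod]
          refine hsum.trans (le_of_eq ?_)
          rw [mul_comm n k, mul_assoc, mul_comm]
          congr 1
          rw [← pow_succ']
          congr 1
          omega
        have : Nat.card α ≤ n ^ k := Nat.le_of_mul_le_mul_right hfin hk
        simpa using this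


def nonfix (q : Fin n → Fin n) : Finset (Fin n) := Finset.univ.filter (fun v => q v ≠ v)

lemma recover_update {q : Fin n → Fin n} {a b : Fin n} (h : q a = b) :
    Function.update (Function.update q a a) a b = q := by
  funext w
  by_cases hw : w = a
  · subst hw; simp [Function.update_self, h]
  · rw [Function.update_of_ne hw, Function.update_of_ne hw]

/-- helper for one orientation of the chosen edge -/
lemma branch_mem {G : SimpleGraph (Fin n)} {j : ℕ} {a b : Fin n} (hab : G.Adj a b)
    {q : Fin n → Fin n} (hRF : IsRF q) (hcomp : ∀ v, q v ≠ v → G.Adj v (q v))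
    (hcnt : (nonfix q).card = j + 1) (hq : q a = b) :
    IsRF (Function.update q a a) ∧
    (∀ v, Function.update q a a v ≠ v →
      (G.deleteEdges {s(a, b)}).Adj v (Function.update q a a v)) ∧
    (nonfix (Function.update q a a)).card = j := by
  have hne : a ≠ b := hab.ne
  have hsub : Sub (Function.update q a a) q := by
    intro w
    by_cases hw : w = a
    · subst hw; left; simp [Function.update_self]
    · right; simp [Function.update_of_ne hw]
  refine ⟨hRF.sub hsub, ?_, ?_⟩
  · intro v hv
    by_cases hva : v = a
    · subst hva; simp [Function.update_self] at hv
    · rw [Function.update_of_ne hva] at hv ⊢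
      rw [SimpleGraph.deleteEdges_adj]
      refine ⟨hcomp v hv, ?_⟩
      simp only [Set.mem_singleton_iff, Sym2.eq_iff]
      rintro (⟨rfl, h2⟩ | ⟨rfl, h2⟩)
      · exact hva rfl
      · exact hne (hRF.no_two_cycle hq h2)
  · have : nonfix (Function.update q a a) = (nonfix q).erase a := by
      ext w
      simp only [nonfix, Finset.mem_erase, Finset.mem_filter, Finset.mem_univ, true_and]
      by_cases hw : w = a
      · subst hw; simp [Function.update_self]
      · rw [Function.update_of_ne hw]
        exact ⟨fun h => ⟨hw, h⟩, fun h => h.2⟩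
    have hmemA : a ∈ nonfix q := by
      simp only [nonfix, Finset.mem_filter, Finset.mem_univ, true_and]
      rw [hq]; exact hne.symm
    rw [this, Finset.card_erase_of_mem hmemA, hcnt]
    omega

lemma rootings_bound : ∀ (j : ℕ) (G : SimpleGraph (Fin n)), G.edgeSet.ncard = j →
    Nat.card {q : Fin n → Fin n // IsRF q ∧ (∀ v, q v ≠ v → G.Adj v (q v)) ∧
      (nonfix q).card = j} ≤ 2 ^ j := by
  intro j
  induction j with
  | zero =>
      intro G hG
      have hGbot : G = ⊥ := by
        rw [← SimpleGraph.edgeSet_eq_empty]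
        exact (Set.ncard_eq_zero G.edgeSet.toFinite).1 hG
      subst hGbot
      have : Subsingleton {q : Fin n → Fin n // IsRF q ∧
          (∀ v, q v ≠ v → (⊥ : SimpleGraph (Fin n)).Adj v (q v)) ∧ (nonfix q).card = 0} := by
        constructor
        rintro ⟨q, -, hc, -⟩ ⟨q', -, hc', -⟩
        refine Subtype.ext (funext fun v => ?_)
        have h1 : q v = v := by by_contra h; exact hc v h
        have h2 : q' v = v := by by_contra h; exact hc' v h
        show q v = q' v
        rw [h1, h2]
      calc Nat.card _ ≤ 1 := Finite.card_le_one_iff_subsingleton.2 this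
        _ ≤ 2 ^ 0 := le_refl _
  | succ j ih =>
      intro G hG
      have hne : G.edgeSet.Nonempty := by
        rw [Set.nonempty_iff_ne_empty]
        intro h
        rw [h] at hG
        simp at hG
      obtain ⟨e, he⟩ := hne
      induction e using Sym2.ind with
      | _ a b =>
      have hab : G.Adj a b := (SimpleGraph.mem_edgeSet G).1 he
      set G' := G.deleteEdges {s(a, b)} with hG'
      have hG'card : G'.edgeSet.ncard = j := by
        rw [hG', SimpleGraph.edgeSet_deleteEdges]
        rw [Set.ncard_diff_singleton_of_mem he, hG]
        omega
      set S := {q : Fin n → Fin n // IsRF q ∧ (∀ v, q v ≠ v → G.Adj v (q v)) ∧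
        (nonfix q).card = j + 1} with hS
      set S' := {q : Fin n → Fin n // IsRF q ∧ (∀ v, q v ≠ v → G'.Adj v (q v)) ∧
        (nonfix q).card = j} with hS'
      -- every q in S uses the edge a-b in one direction
      have huse : ∀ z : S, z.1 a = b ∨ z.1 b = a := by
        rintro ⟨q, hRF, hcomp, hcnt⟩
        classical
        letI : Fintype {v : Fin n // v ∈ nonfix q} := by infer_instance
        have hmem : ∀ v : {v : Fin n // v ∈ nonfix q}, s(v.1, q v.1) ∈ G.edgeSet := by
          rintro ⟨v, hv⟩
          simp only [nonfix, Finset.mem_filter] at hv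
          exact (SimpleGraph.mem_edgeSet G).2 (hcomp v hv.2)
        set φ : {v : Fin n // v ∈ nonfix q} → G.edgeSet := fun v => ⟨s(v.1, q v.1), hmem v⟩
          with hφ
        have hinj : Function.Injective φ := by
          rintro ⟨v, hv⟩ ⟨w, hw⟩ h
          simp only [hφ, Subtype.mk.injEq, Sym2.eq_iff] at h
          rcases h with ⟨h1, -⟩ | ⟨h1, h2⟩
          · exact Subtype.ext h1
          · have hwv : w = v := hRF.no_two_cycle h1.symm h2
            subst hwv
            simp only [nonfix, Finset.mem_filter, Finset.mem_univ, true_and] at hv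
            exact absurd h2 hv
        letI : Fintype G.edgeSet := Fintype.ofFinite _
        have hbij : Function.Bijective φ := by
          rw [Fintype.bijective_iff_injective_and_card]
          refine ⟨hinj, ?_⟩
          have hc1 : Fintype.card {v : Fin n // v ∈ nonfix q} = j + 1 := by
            rw [Fintype.card_coe]
            exact hcnt
          have hc2 : Fintype.card G.edgeSet = j + 1 := by
            rw [← Nat.card_eq_fintype_card, Nat.card_coe_set_eq, hG]
          rw [hc1, hc2]
        obtain ⟨⟨v, hv⟩, hveq⟩ := hbij.2 ⟨s(a, b), he⟩
        simp only [hφ, Subtype.mk.injEq, Sym2.eq_iff] at hveq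
        rcases hveq with ⟨rfl, h2⟩ | ⟨rfl, h2⟩
        · exact Or.inl h2
        · exact Or.inr h2
      -- build the injection into Bool × S'
      have hmem1 : ∀ z : S, z.1 a = b →
          IsRF (Function.update z.1 a a) ∧
          (∀ v, Function.update z.1 a a v ≠ v →
            G'.Adj v (Function.update z.1 a a v)) ∧
          (nonfix (Function.update z.1 a a)).card = j :=
        fun z hq => branch_mem hab z.2.1 z.2.2.1 z.2.2.2 hq
      have hmem2 : ∀ z : S, z.1 b = a →
          IsRF (Function.update z.1 b b) ∧
          (∀ v, Function.update z.1 b b v ≠ v →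
            G'.Adj v (Function.update z.1 b b v)) ∧
          (nonfix (Function.update z.1 b b)).card = j := by
        intro z hq
        have h := branch_mem hab.symm z.2.1 z.2.2.1 z.2.2.2 hq
        have hswap : ({s(b, a)} : Set (Sym2 (Fin n))) = {s(a, b)} := by
          rw [Sym2.eq_swap]
        rw [hswap] at h
        exact h
      classical
      let Ψ : S → Bool × S' := fun z =>
        if hq : z.1 a = b then (true, ⟨Function.update z.1 a a, hmem1 z hq⟩)
        else (false, ⟨Function.update z.1 b b,
          hmem2 z ((huse z).resolve_left hq)⟩)
      have hΨinj : Function.Injective Ψ := by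
        intro z1 z2 h
        by_cases h1 : z1.1 a = b <;> by_cases h2 : z2.1 a = b <;>
          simp only [Ψ, h1, h2, dif_pos, dif_neg, not_false_iff, Prod.mk.injEq] at h
        · have hval : Function.update z1.1 a a = Function.update z2.1 a a :=
            congrArg Subtype.val h.2
          refine Subtype.ext ?_
          rw [← recover_update h1, hval, recover_update h2]
        · exact absurd h.1 (by simp)
        · exact absurd h.1 (by simp)
        · have hb1 := (huse z1).resolve_left h1
          have hb2 := (huse z2).resolve_left h2
          have hval : Function.update z1.1 b b = Function.update z2.1 b b :=
            congrArg Subtype.val h.2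
          refine Subtype.ext ?_
          rw [← recover_update hb1, hval, recover_update hb2]
      calc Nat.card S ≤ Nat.card (Bool × S') := Nat.card_le_card_of_injective Ψ hΨinj
        _ = 2 * Nat.card S' := by rw [Nat.card_prod]; simp
        _ ≤ 2 * 2 ^ j := Nat.mul_le_mul_left 2 (ih G' hG'card)
        _ = 2 ^ (j + 1) := by ring


section Bridge

open SimpleGraph

variable {T : SimpleGraph (Fin n)}

noncomputable def pth (hT : T.IsTree) (r v : Fin n) : T.Walk v r :=
  (hT.existsUnique_path v r).exists.choose

lemma pth_isPath (hT : T.IsTree) (r v : Fin n) : (pth hT r v).IsPath :=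
  (hT.existsUnique_path v r).exists.choose_spec

lemma pth_unique (hT : T.IsTree) (r v : Fin n) (w : T.Walk v r) (hw : w.IsPath) :
    w = pth hT r v :=
  (hT.existsUnique_path v r).unique hw (pth_isPath hT r v)

noncomputable def par (hT : T.IsTree) (r : Fin n) (v : Fin n) : Fin n :=
  (pth hT r v).getVert 1

lemma par_self (hT : T.IsTree) (r : Fin n) : par hT r r = r := by
  have : pth hT r r = SimpleGraph.Walk.nil :=
    ((SimpleGraph.Walk.isPath_iff_eq_nil).1 (pth_isPath hT r r))
  rw [par, this]
  rfl

lemma pth_length_pos (hT : T.IsTree) {r v : Fin n} (hv : v ≠ r) :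
    0 < (pth hT r v).length := by
  rcases Nat.eq_zero_or_pos (pth hT r v).length with h | h
  · exact absurd (SimpleGraph.Walk.eq_of_length_eq_zero h) hv
  · exact h

lemma par_adj (hT : T.IsTree) {r v : Fin n} (hv : v ≠ r) : T.Adj v (par hT r v) := by
  have := SimpleGraph.Walk.adj_getVert_succ (pth hT r v) (pth_length_pos hT hv)
  simpa [SimpleGraph.Walk.getVert_zero, par] using this

lemma par_cons (hT : T.IsTree) {r v : Fin n} (hv : v ≠ r) :
    ∃ (h : T.Adj v (par hT r v)),
      pth hT r v = SimpleGraph.Walk.cons h (pth hT r (par hT r v)) := by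
  cases hp : pth hT r v with
  | nil => exact absurd rfl hv
  | @cons _ x _ hadj q =>
    have hx : par hT r v = x := by
      rw [par, hp, SimpleGraph.Walk.getVert_cons_succ, SimpleGraph.Walk.getVert_zero]
    subst hx
    have hq : q.IsPath := by
      have := pth_isPath hT r v
      rw [hp] at this
      exact this.of_cons
    have hqe := pth_unique hT r _ q hq
    exact ⟨hadj, congrArg (fun w => SimpleGraph.Walk.cons hadj w) hqe⟩

lemma par_length (hT : T.IsTree) {r v : Fin n} (hv : v ≠ r) :
    (pth hT r (par hT r v)).length < (pth hT r v).length := by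
  obtain ⟨h, hcons⟩ := par_cons hT hv
  rw [hcons]
  simp [SimpleGraph.Walk.length_cons]

lemma par_isRF (hT : T.IsTree) (r : Fin n) : IsRF (par hT r) := by
  intro v
  have : ∀ (m : ℕ) (v : Fin n), (pth hT r v).length ≤ m →
      ∃ k, par hT r ((par hT r)^[k] v) = (par hT r)^[k] v := by
    intro m
    induction m with
    | zero =>
        intro v hv
        have hvr : v = r := SimpleGraph.Walk.eq_of_length_eq_zero (Nat.le_zero.1 hv)
        exact ⟨0, by rw [hvr]; exact par_self hT r⟩
    | succ m ih =>
        intro v hv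
        by_cases hvr : v = r
        · exact ⟨0, by rw [hvr]; exact par_self hT r⟩
        · have hlt := par_length hT hvr
          obtain ⟨k, hk⟩ := ih (par hT r v) (by omega)
          exact ⟨k + 1, by rw [Function.iterate_add_apply]; simpa using hk⟩
  exact this (pth hT r v).length v le_rfl

lemma par_root_iff (hT : T.IsTree) (r v : Fin n) : par hT r v = v ↔ v = r := by
  constructor
  · intro h
    by_contra hvr
    exact (par_adj hT hvr).ne' h
  · intro h; rw [h]; exact par_self hT r

lemma par_roots (hT : T.IsTree) (r : Fin n) : rootsF (par hT r) = {r} := by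
  ext v
  rw [mem_rootsF, par_root_iff, Finset.mem_singleton]

lemma par_isTreeF (hT : T.IsTree) (r : Fin n) : IsTreeF (par hT r) :=
  ⟨par_isRF hT r, by rw [par_roots]; simp⟩

lemma length_lt_of_not_par (hT : T.IsTree) (r : Fin n) {u v : Fin n}
    (hadj : T.Adj u v) (hne : par hT r u ≠ v) :
    (pth hT r u).length < (pth hT r v).length := by
  -- the walk cons hadj (pth v) : Walk u r is not a path
  have hnp : ¬ (SimpleGraph.Walk.cons hadj (pth hT r v)).IsPath := by
    intro hp
    have := pth_unique hT r u _ hp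
    have : par hT r u = v := by
      rw [par, ← this, SimpleGraph.Walk.getVert_cons_succ, SimpleGraph.Walk.getVert_zero]
    exact hne this
  rw [SimpleGraph.Walk.cons_isPath_iff] at hnp
  push_neg at hnp
  have hu : u ∈ (pth hT r v).support := hnp (pth_isPath hT r v)
  have hdrop : ((pth hT r v).dropUntil u hu).IsPath :=
    (pth_isPath hT r v).dropUntil hu
  have hequ : (pth hT r v).dropUntil u hu = pth hT r u := pth_unique hT r u _ hdrop
  have hspec := (pth hT r v).take_spec hu
  have hlen := congrArg SimpleGraph.Walk.length hspec
  rw [SimpleGraph.Walk.length_append] at hlen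
  have htake : 0 < ((pth hT r v).takeUntil u hu).length := by
    rcases Nat.eq_zero_or_pos ((pth hT r v).takeUntil u hu).length with h | h
    · exact absurd (SimpleGraph.Walk.eq_of_length_eq_zero h) hadj.ne'
    · exact h
  rw [hequ] at hlen
  omega

lemma par_edge (hT : T.IsTree) (r : Fin n) {u v : Fin n} (hadj : T.Adj u v) :
    par hT r u = v ∨ par hT r v = u := by
  by_contra h
  push_neg at h
  have h1 := length_lt_of_not_par hT r hadj h.1
  have h2 := length_lt_of_not_par hT r hadj.symm h.2
  omega

lemma adj_iff_par (hT : T.IsTree) (r : Fin n) (u v : Fin n) :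
    T.Adj u v ↔ u ≠ v ∧ (par hT r u = v ∨ par hT r v = u) := by
  constructor
  · intro h
    exact ⟨h.ne, par_edge hT r h⟩
  · rintro ⟨hne, h | h⟩
    · have hur : u ≠ r := by
        intro hur
        rw [hur, par_self] at h
        exact hne (hur.trans h)
      have := par_adj hT hur
      rwa [h] at this
    · have hvr : v ≠ r := by
        intro hvr
        rw [hvr, par_self] at h
        exact hne (h.symm.trans hvr.symm)
      have := par_adj hT hvr
      rw [h] at this
      exact this.symm

end Bridge


lemma roots_card_of_nonfix {q : Fin n → Fin n} {j : ℕ} (h : (nonfix q).card = j) :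
    (rootsF q).card = n - j := by
  have hsplit := Finset.card_filter_add_card_filter_not
    (s := (Finset.univ : Finset (Fin n))) (p := fun v => q v = v)
  have h1 : (Finset.univ.filter (fun v => ¬ q v = v)).card = j := h
  have h2 : (Finset.univ : Finset (Fin n)).card = n := by simp
  have h3 : (rootsF q).card = (Finset.univ.filter (fun v => q v = v)).card := rfl
  omega

end TreeCnt

open TreeCnt in
/-- Among all forests with `ℓ` edges, matchings maximize the number of spanning trees of
`K_n` containing them: any forest `F'` with `ℓ` edges is contained in at most
`2^ℓ · n^(n-2-ℓ)` spanning trees (assuming `2ℓ ≤ n`). -/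
theorem matching_maximizes_tree_count (n ℓ : ℕ) (hℓ : 2 * ℓ ≤ n)
    (F' : SimpleGraph (Fin n)) (hF' : F'.IsAcyclic) (hcard : F'.edgeSet.ncard = ℓ) :
    Nat.card {T : SimpleGraph (Fin n) // T.IsTree ∧ F' ≤ T} ≤ 2 ^ ℓ * n ^ (n - 2 - ℓ) := by
  classical
  by_cases hm : 2 ≤ n - ℓ
  · -- main case
    have hn0 : 0 < n := by omega
    set P := {p : Fin n → Fin n // IsTreeF p ∧
      ∀ u v : Fin n, F'.Adj u v → p u = v ∨ p v = u} with hP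
    set Sq := {q : Fin n → Fin n // IsRF q ∧ (∀ v, q v ≠ v → F'.Adj v (q v)) ∧
      (nonfix q).card = ℓ} with hSq
    -- Step 1 : rooted trees containing F' inject into P
    have step1 : Nat.card {T : SimpleGraph (Fin n) // T.IsTree ∧ F' ≤ T} * n ≤
        Nat.card P := by
      have hΘmem : ∀ (z : {T : SimpleGraph (Fin n) // T.IsTree ∧ F' ≤ T} × Fin n),
          IsTreeF (par z.1.2.1 z.2) ∧
          ∀ u v : Fin n, F'.Adj u v → par z.1.2.1 z.2 u = v ∨ par z.1.2.1 z.2 v = u := by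
        rintro ⟨⟨T, hT, hFT⟩, r⟩
        exact ⟨par_isTreeF hT r, fun u v h => par_edge hT r (hFT h)⟩
      have hΘinj : Function.Injective
          (fun z : {T : SimpleGraph (Fin n) // T.IsTree ∧ F' ≤ T} × Fin n =>
            (⟨par z.1.2.1 z.2, hΘmem z⟩ : P)) := by
        rintro ⟨⟨T, hT, hFT⟩, r⟩ ⟨⟨T', hT', hFT'⟩, r'⟩ h
        have hpe : par hT r = par hT' r' := congrArg Subtype.val h
        have hrr : r = r' := by
          have h1 : par hT' r' r = r := by rw [← hpe]; exact par_self hT r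
          exact (par_root_iff hT' r' r).1 h1
        have hTT : T = T' := by
          ext u v
          rw [adj_iff_par hT r u v, adj_iff_par hT' r' u v, hpe]
        subst hTT
        refine Prod.ext (Subtype.ext rfl) hrr
      calc Nat.card {T : SimpleGraph (Fin n) // T.IsTree ∧ F' ≤ T} * n
          = Nat.card ({T : SimpleGraph (Fin n) // T.IsTree ∧ F' ≤ T} × Fin n) := by
            rw [Nat.card_prod]; simp
        _ ≤ Nat.card P := Nat.card_le_card_of_injective _ hΘinj
    -- Step 2 : P fibered over Sq
    have step2 : Nat.card P ≤ Nat.card Sq * n ^ (n - ℓ - 1) := by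
      have hprojmem : ∀ z : P,
          IsRF (fun v => if F'.Adj v (z.1 v) then z.1 v else v) ∧
          (∀ v, (fun v => if F'.Adj v (z.1 v) then z.1 v else v) v ≠ v →
            F'.Adj v ((fun v => if F'.Adj v (z.1 v) then z.1 v else v) v)) ∧
          (nonfix (fun v => if F'.Adj v (z.1 v) then z.1 v else v)).card = ℓ := by
        rintro ⟨p, hTF, hcomp⟩
        set q : Fin n → Fin n := fun v => if F'.Adj v (p v) then p v else v with hq
        have hsub : Sub q p := by
          intro v
          by_cases hv : F'.Adj v (p v)
          · right; simp [hq, hv]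
          · left; simp [hq, hv]
        have hRF : IsRF q := hTF.1.sub hsub
        have hcompat : ∀ v, q v ≠ v → F'.Adj v (q v) := by
          intro v hv
          by_cases hadj : F'.Adj v (p v)
          · simp only [hq]; rw [if_pos hadj]; exact hadj
          · simp [hq, hadj] at hv
        refine ⟨hRF, hcompat, ?_⟩
        -- count the nonfixed points : they biject with the edges of F'
        letI : Fintype F'.edgeSet := Fintype.ofFinite _
        have hmem : ∀ v : {v : Fin n // v ∈ nonfix q}, s(v.1, q v.1) ∈ F'.edgeSet := by
          rintro ⟨v, hv⟩
          simp only [nonfix, Finset.mem_filter, Finset.mem_univ, true_and] at hv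
          exact (SimpleGraph.mem_edgeSet F').2 (hcompat v hv)
        have hbij : Function.Bijective
            (fun v : {v : Fin n // v ∈ nonfix q} => (⟨s(v.1, q v.1), hmem v⟩ : F'.edgeSet)) := by
          constructor
          · rintro ⟨v, hv⟩ ⟨w, hw⟩ h
            simp only [Subtype.mk.injEq, Sym2.eq_iff] at h
            rcases h with ⟨h1, -⟩ | ⟨h1, h2⟩
            · exact Subtype.ext h1
            · have hwv : w = v := hRF.no_two_cycle h1.symm h2
              subst hwv
              simp only [nonfix, Finset.mem_filter, Finset.mem_univ, true_and] at hv
              exact absurd h2 hv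
          · rintro ⟨e, he⟩
            induction e using Sym2.ind with
            | _ a b =>
              have hadj : F'.Adj a b := (SimpleGraph.mem_edgeSet F').1 he
              rcases hcomp a b hadj with hpa | hpb
              · have hqa : q a = b := by
                  have hadj'' : F'.Adj a (p a) := by rw [hpa]; exact hadj
                  simp only [hq]; rw [if_pos hadj'']; exact hpa
                have hmem' : a ∈ nonfix q := by
                  simp only [nonfix, Finset.mem_filter, Finset.mem_univ, true_and]
                  rw [hqa]; exact hadj.ne'
                exact ⟨⟨a, hmem'⟩, by simp only [Subtype.mk.injEq]; rw [hqa]⟩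
              · have hadj' : F'.Adj b (p b) := by rw [hpb]; exact hadj.symm
                have hqb : q b = a := by simp only [hq]; rw [if_pos hadj']; exact hpb
                have hmem' : b ∈ nonfix q := by
                  simp only [nonfix, Finset.mem_filter, Finset.mem_univ, true_and]
                  rw [hqb]; exact hadj.ne
                refine ⟨⟨b, hmem'⟩, ?_⟩
                simp only [Subtype.mk.injEq]
                rw [hqb, Sym2.eq_swap]
        calc (nonfix q).card = Fintype.card {v : Fin n // v ∈ nonfix q} :=
              (Fintype.card_coe _).symm
          _ = Fintype.card F'.edgeSet := Fintype.card_of_bijective hbij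
          _ = Nat.card F'.edgeSet := (Nat.card_eq_fintype_card).symm
          _ = F'.edgeSet.ncard := Nat.card_coe_set_eq _
          _ = ℓ := hcard
      let proj : P → Sq := fun z =>
        ⟨fun v => if F'.Adj v (z.1 v) then z.1 v else v, hprojmem z⟩
      -- fibers of proj are sets of trees extending a fixed rooted forest
      have fiber_bound : ∀ q₀ : Sq, Nat.card {z : P // proj z = q₀} ≤ n ^ (n - ℓ - 1) := by
        intro q₀
        have hext : ∀ z : {z : P // proj z = q₀}, IsTreeF z.1.1 ∧ Ext q₀.1 z.1.1 := by
          rintro ⟨⟨p, hTF, hcomp⟩, hz⟩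
          refine ⟨hTF, ?_⟩
          intro v hv
          have hq0 : q₀.1 = fun v => if F'.Adj v (p v) then p v else v := by
            rw [← hz]
          rw [hq0] at hv ⊢
          simp only at hv ⊢
          by_cases hadj : F'.Adj v (p v)
          · simp [hadj]
          · simp [hadj] at hv
        have hinj : Function.Injective (fun z : {z : P // proj z = q₀} =>
            (⟨z.1.1, hext z⟩ : {p : Fin n → Fin n // IsTreeF p ∧ Ext q₀.1 p})) := by
          rintro ⟨⟨p, hp⟩, hz⟩ ⟨⟨p', hp'⟩, hz'⟩ h
          have : p = p' := congrArg Subtype.val h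
          subst this
          rfl
        have hq0roots : (rootsF q₀.1).card = n - ℓ := roots_card_of_nonfix q₀.2.2.2
        calc Nat.card {z : P // proj z = q₀}
            ≤ Nat.card {p : Fin n → Fin n // IsTreeF p ∧ Ext q₀.1 p} :=
              Nat.card_le_card_of_injective _ hinj
          _ ≤ n ^ (n - ℓ - 1) := pitman (n - ℓ) q₀.1 q₀.2.1 hq0roots
      letI : Fintype P := Fintype.ofFinite P
      letI : Fintype Sq := Fintype.ofFinite Sq
      have hcards : Nat.card P = ∑ q₀ : Sq, Nat.card {z : P // proj z = q₀} := by
        rw [← Nat.card_congr (Equiv.sigmaFiberEquiv proj)]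
        rw [Nat.card_eq_fintype_card, Fintype.card_sigma]
        simp [Nat.card_eq_fintype_card]
      rw [hcards]
      calc ∑ q₀ : Sq, Nat.card {z : P // proj z = q₀}
          ≤ (Finset.univ : Finset Sq).card * n ^ (n - ℓ - 1) := by
            rw [← smul_eq_mul]
            exact Finset.sum_le_card_nsmul _ _ _ (fun q₀ _ => fiber_bound q₀)
        _ = Nat.card Sq * n ^ (n - ℓ - 1) := by
            rw [Finset.card_univ, Nat.card_eq_fintype_card]
    -- Step 3 : rootings of F' are at most 2^ℓ
    have step3 : Nat.card Sq ≤ 2 ^ ℓ := rootings_bound ℓ F' hcard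
    -- combine
    have hfinal : Nat.card {T : SimpleGraph (Fin n) // T.IsTree ∧ F' ≤ T} * n ≤
        (2 ^ ℓ * n ^ (n - 2 - ℓ)) * n := by
      refine step1.trans (step2.trans ?_)
      have hexp : n - ℓ - 1 = (n - 2 - ℓ) + 1 := by omega
      calc Nat.card Sq * n ^ (n - ℓ - 1) ≤ 2 ^ ℓ * n ^ (n - ℓ - 1) :=
            Nat.mul_le_mul_right _ step3
        _ = (2 ^ ℓ * n ^ (n - 2 - ℓ)) * n := by rw [hexp, pow_succ]; ring
    exact Nat.le_of_mul_le_mul_right hfinal hn0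
  · -- degenerate case : n ≤ 2
    have hn2 : n ≤ 2 := by omega
    have hexp : n - 2 - ℓ = 0 := by omega
    rw [hexp, pow_zero, mul_one]
    have hsub : Subsingleton {T : SimpleGraph (Fin n) // T.IsTree ∧ F' ≤ T} := by
      constructor
      rintro ⟨T, hT, hFT⟩ ⟨T', hT', hFT'⟩
      rcases Nat.lt_or_ge n 2 with hn1 | hn2'
      · -- n ≤ 1 : all graphs are equal
        refine Subtype.ext ?_
        ext u v
        have huv : u = v := by
          have h1 := u.isLt
          have h2 := v.isLt
          exact Fin.ext (by omega)
        subst huv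
        simp
      · -- n = 2 and ℓ = 1
        have hn : n = 2 := by omega
        have hℓ1 : ℓ = 1 := by omega
        subst hn
        have hne : F'.edgeSet.Nonempty := by
          rw [Set.nonempty_iff_ne_empty]
          intro h
          rw [h] at hcard
          simp [hℓ1] at hcard
        obtain ⟨e, he⟩ := hne
        induction e using Sym2.ind with
        | _ a b =>
        have hab : F'.Adj a b := (SimpleGraph.mem_edgeSet F').1 he
        have hadj_iff : ∀ (S : SimpleGraph (Fin 2)), S.IsTree → F' ≤ S →
            ∀ u v : Fin 2, S.Adj u v ↔ u ≠ v := by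
          intro S hS hFS u v
          constructor
          · exact fun h => h.ne
          · intro huv
            have haneb : a ≠ b := hab.ne
            have hSab : S.Adj a b := hFS hab
            fin_cases u <;> fin_cases v <;> fin_cases a <;> fin_cases b <;>
              simp_all <;> exact hSab.symm
        refine Subtype.ext ?_
        ext u v
        rw [hadj_iff T hT hFT u v, hadj_iff T' hT' hFT' u v]
    calc Nat.card {T : SimpleGraph (Fin n) // T.IsTree ∧ F' ≤ T} ≤ 1 :=
          Finite.card_le_one_iff_subsingleton.2 hsub
      _ ≤ 2 ^ ℓ := Nat.one_le_two_pow
end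

section
/- If Γ is a vertex-transitive graph on N vertices, then ω(Γ) · α(Γ) ≤ N, where ω denotes the clique number and α the independence number. -/
open Finset

section aux
variable {V : Type*} [Fintype V] {Γ : SimpleGraph V}

noncomputable instance : Fintype (Γ ≃g Γ) := by
  have : Finite (Γ ≃g Γ) :=
    Finite.of_injective (fun g => g.toEquiv) (fun a b h => by cases a; cases b; simpa using h)
  exact Fintype.ofFinite _

open scoped Classical in
/-- The number of automorphisms sending `a` to `b` doesn't depend on `(a, b)`. -/
lemma cc_count_const (htrans : ∀ u v : V, ∃ φ : Γ ≃g Γ, φ u = v) (a b u v : V) :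
    #(univ.filter (fun g : Γ ≃g Γ => g a = b)) =
      #(univ.filter (fun g : Γ ≃g Γ => g u = v)) := by
  obtain ⟨φ₁, hφ₁⟩ := htrans u a
  obtain ⟨φ₂, hφ₂⟩ := htrans v b
  apply Finset.card_bij (fun g _ => φ₂⁻¹ * g * φ₁)
  · intro g hg
    simp only [mem_filter, mem_univ, true_and] at hg ⊢
    show φ₂.symm (g (φ₁ u)) = v
    rw [hφ₁, hg, ← hφ₂]
    exact φ₂.symm_apply_apply v
  · intro g _ g' _ h
    have := congrArg (fun x => φ₂ * x * φ₁⁻¹) h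
    simpa [mul_assoc] using this
  · intro g hg
    refine ⟨φ₂ * g * φ₁⁻¹, ?_, by simp [mul_assoc]⟩
    simp only [mem_filter, mem_univ, true_and] at hg ⊢
    show φ₂ (g (φ₁.symm a)) = b
    rw [← hφ₁, φ₁.symm_apply_apply, hg, hφ₂]

end aux

/-- Clique–coclique bound: if `Γ` is a vertex-transitive graph on `N` vertices, then
`ω(Γ) · α(Γ) ≤ N`, where the independence number `α(Γ)` is the clique number of the
complement. -/
theorem clique_coclique (V : Type*) [Fintype V] (Γ : SimpleGraph V)
    (htrans : ∀ u v : V, ∃ φ : Γ ≃g Γ, φ u = v) :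
    Γ.cliqueNum * Γᶜ.cliqueNum ≤ Fintype.card V := by
  classical
  obtain ⟨C, hC⟩ := Γ.exists_isNClique_cliqueNum
  obtain ⟨I, hI⟩ := Γᶜ.exists_isNClique_cliqueNum
  rcases isEmpty_or_nonempty V with hV | ⟨⟨v₀⟩⟩
  · have : C = ∅ := Finset.eq_empty_of_isEmpty C
    simp [← hC.card_eq, this]
  set s : ℕ := #(univ.filter (fun g : Γ ≃g Γ => g v₀ = v₀)) with hs
  -- each translate of the clique meets the independent set in at most one vertex
  have key : ∀ g : Γ ≃g Γ, #(C.image (g : V → V) ∩ I) ≤ 1 := by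
    intro g
    rw [Finset.card_le_one]
    rintro x hx y hy
    by_contra hxy
    obtain ⟨a, ha, rfl⟩ := Finset.mem_image.mp (Finset.mem_inter.mp hx).1
    obtain ⟨b, hb, rfl⟩ := Finset.mem_image.mp (Finset.mem_inter.mp hy).1
    have hab : a ≠ b := fun h => hxy (by rw [h])
    have hadj : Γ.Adj (g a) (g b) := g.map_adj_iff.mpr (hC.isClique ha hb hab)
    have hnadj : Γᶜ.Adj (g a) (g b) :=
      hI.isClique (Finset.mem_inter.mp hx).2 (Finset.mem_inter.mp hy).2 hxy
    exact hnadj.2 hadj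
  -- rewrite each intersection cardinality as a double sum of indicators
  have count : ∀ g : Γ ≃g Γ, #(C.image (g : V → V) ∩ I) =
      ∑ c ∈ C, ∑ i ∈ I, (if g c = i then 1 else 0) := by
    intro g
    have h1 : C.image (g : V → V) ∩ I = (C.filter (fun c => g c ∈ I)).image (g : V → V) := by
      ext x
      simp only [mem_inter, mem_image, mem_filter]
      constructor
      · rintro ⟨⟨c, hc, rfl⟩, hx⟩; exact ⟨c, ⟨hc, hx⟩, rfl⟩
      · rintro ⟨c, ⟨hc, hcI⟩, rfl⟩; exact ⟨⟨c, hc, rfl⟩, hcI⟩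
    rw [h1, Finset.card_image_of_injective _ g.injective,
      Finset.card_filter]
    refine Finset.sum_congr rfl fun c _ => ?_
    rw [Finset.sum_ite_eq I (g c) (fun _ => 1)]
  -- the double count
  have S_le : ∑ g : Γ ≃g Γ, #(C.image (g : V → V) ∩ I) ≤ Fintype.card (Γ ≃g Γ) := by
    calc ∑ g : Γ ≃g Γ, #(C.image (g : V → V) ∩ I) ≤ ∑ _g : Γ ≃g Γ, 1 :=
          Finset.sum_le_sum fun g _ => key g
      _ = Fintype.card (Γ ≃g Γ) := by simp
  have S_eq : ∑ g : Γ ≃g Γ, #(C.image (g : V → V) ∩ I) = #C * #I * s := by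
    calc ∑ g : Γ ≃g Γ, #(C.image (g : V → V) ∩ I)
        = ∑ g : Γ ≃g Γ, ∑ c ∈ C, ∑ i ∈ I, (if g c = i then 1 else 0) := by
          exact Finset.sum_congr rfl fun g _ => count g
      _ = ∑ c ∈ C, ∑ i ∈ I, ∑ g : Γ ≃g Γ, (if g c = i then 1 else 0) := by
          rw [Finset.sum_comm]
          refine Finset.sum_congr rfl fun c _ => Finset.sum_comm
      _ = ∑ c ∈ C, ∑ i ∈ I, #(univ.filter (fun g : Γ ≃g Γ => g c = i)) := by
          refine Finset.sum_congr rfl fun c _ => Finset.sum_congr rfl fun i _ => ?_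
          rw [Finset.card_filter]
      _ = ∑ _c ∈ C, ∑ _i ∈ I, s :=
          Finset.sum_congr rfl fun c _ => Finset.sum_congr rfl fun i _ =>
            cc_count_const htrans c i v₀ v₀
      _ = #C * #I * s := by simp [mul_assoc]
  have G_eq : Fintype.card (Γ ≃g Γ) = Fintype.card V * s := by
    calc Fintype.card (Γ ≃g Γ)
        = ∑ v : V, #(univ.filter (fun g : Γ ≃g Γ => g v₀ = v)) := by
          rw [← Finset.card_univ]
          exact Finset.card_eq_sum_card_fiberwise (fun g _ => Finset.mem_univ (g v₀))
      _ = ∑ _v : V, s :=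
          Finset.sum_congr rfl fun v _ => cc_count_const htrans v₀ v v₀ v₀
      _ = Fintype.card V * s := by simp [Finset.card_univ]
  have hs_pos : 0 < s := by
    rw [hs, Finset.card_pos]
    exact ⟨1, by simp⟩
  have : #C * #I * s ≤ Fintype.card V * s := by
    rw [← S_eq, ← G_eq]; exact S_le
  have := Nat.le_of_mul_le_mul_right this hs_pos
  rwa [hC.card_eq, hI.card_eq] at this
end

section
/- Let T ⊆ U be forests in K_n with |U| = |T| + 1. Then the number of spanning trees of K_n containing T is at least (n/2) times the number of spanning trees containing U. -/
open SimpleGraph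

namespace TreeCountAux

variable {V : Type*}

/-- Splitting a walk at a deleted edge: if `w` reaches `x` in `G`, then after deleting the
edge `s(x,y)`, `w` reaches `x` or `y`. -/
lemma reach_del_aux {G : SimpleGraph V} {x y w u : V} (p : G.Walk w u) :
    (G \ fromEdgeSet {s(x, y)}).Reachable w u ∨ (G \ fromEdgeSet {s(x, y)}).Reachable w x ∨
      (G \ fromEdgeSet {s(x, y)}).Reachable w y := by
  induction p with
  | nil => exact Or.inl (Reachable.refl _)
  | @cons a b c hab p ih =>
    by_cases hcase : s(a, b) = s(x, y)
    · rw [Sym2.eq_iff] at hcase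
      rcases hcase with ⟨rfl, rfl⟩ | ⟨rfl, rfl⟩
      · exact Or.inr (Or.inl (Reachable.refl _))
      · exact Or.inr (Or.inr (Reachable.refl _))
    · have hadj : (G \ fromEdgeSet {s(x, y)}).Adj a b := by
        rw [sdiff_adj, fromEdgeSet_adj]
        exact ⟨hab, fun hf => hcase hf.1⟩
      rcases ih with h | h | h
      · exact Or.inl (hadj.reachable.trans h)
      · exact Or.inr (Or.inl (hadj.reachable.trans h))
      · exact Or.inr (Or.inr (hadj.reachable.trans h))

lemma reach_del {G : SimpleGraph V} {x w : V} (y : V) (h : G.Reachable w x) :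
    (G \ fromEdgeSet {s(x, y)}).Reachable w x ∨ (G \ fromEdgeSet {s(x, y)}).Reachable w y := by
  obtain ⟨p⟩ := h
  rcases reach_del_aux (x := x) (y := y) p with h | h | h
  · exact Or.inl h
  · exact Or.inl h
  · exact Or.inr h

lemma del_sup_edge {G : SimpleGraph V} {a b : V} (h : ¬G.Adj a b) :
    (G ⊔ edge a b) \ fromEdgeSet {s(a, b)} = G := by
  ext c d
  simp only [sdiff_adj, sup_adj, edge_adj, fromEdgeSet_adj, Set.mem_singleton_iff]
  constructor
  · rintro ⟨hc | hc, hn⟩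
    · exact hc
    · exact absurd ⟨by rw [Sym2.eq_iff]; tauto, hc.2⟩ hn
  · intro hc
    refine ⟨Or.inl hc, fun hf => ?_⟩
    rw [Sym2.eq_iff] at hf
    rcases hf.1 with ⟨rfl, rfl⟩ | ⟨rfl, rfl⟩
    · exact h hc
    · exact h hc.symm

lemma sdiff_sup_edge_eq {S : SimpleGraph V} {x y : V} (hxy : S.Adj x y) :
    (S \ fromEdgeSet {s(x, y)}) ⊔ edge x y = S := by
  ext a b
  simp only [sup_adj, sdiff_adj, fromEdgeSet_adj, Set.mem_singleton_iff, edge_adj]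
  constructor
  · rintro (⟨h, _⟩ | ⟨⟨rfl, rfl⟩ | ⟨rfl, rfl⟩, _⟩)
    · exact h
    · exact hxy
    · exact hxy.symm
  · intro h
    by_cases hf : s(a, b) = s(x, y)
    · rw [Sym2.eq_iff] at hf
      exact Or.inr ⟨hf, h.ne⟩
    · exact Or.inl ⟨h, fun hc => hf hc.1⟩

lemma not_reach_del {S : SimpleGraph V} {x y : V} (hS : S.IsAcyclic) (hxy : S.Adj x y) :
    ¬(S \ fromEdgeSet {s(x, y)}).Reachable x y :=
  ((isAcyclic_iff_forall_adj_isBridge.mp hS hxy) : _)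

section Swap

variable {S T : SimpleGraph V} {x y v : V}

lemma v_ne_y (hb : ¬(S \ fromEdgeSet {s(x, y)}).Reachable x y)
    (hv : (S \ fromEdgeSet {s(x, y)}).Reachable v x) : v ≠ y :=
  fun h => hb (h ▸ hv).symm

lemma not_adj_vy (hb : ¬(S \ fromEdgeSet {s(x, y)}).Reachable x y)
    (hv : (S \ fromEdgeSet {s(x, y)}).Reachable v x) :
    ¬(S \ fromEdgeSet {s(x, y)}).Adj v y :=
  fun h => hb (hv.symm.trans h.reachable)

lemma swap_isTree (hS : S.IsTree) (hxy : S.Adj x y)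
    (hv : (S \ fromEdgeSet {s(x, y)}).Reachable v x) :
    ((S \ fromEdgeSet {s(x, y)}) ⊔ edge v y).IsTree := by
  set D := S \ fromEdgeSet {s(x, y)} with hD
  have hb : ¬D.Reachable x y := not_reach_del hS.IsAcyclic hxy
  have hvy : v ≠ y := v_ne_y hb hv
  have hnadj : ¬D.Adj v y := not_adj_vy hb hv
  have hGadj : (D ⊔ edge v y).Adj v y :=
    (sup_adj D (edge v y) v y).mpr (Or.inr ((edge_adj v y v y).mpr ⟨Or.inl ⟨rfl, rfl⟩, hvy⟩))
  constructor
  · -- connected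
    rw [connected_iff]
    refine ⟨?_, ⟨x⟩⟩
    have key : ∀ w, (D ⊔ edge v y).Reachable w y := by
      intro w
      rcases reach_del y (hS.isConnected w x) with h | h
      · exact ((h.mono le_sup_left).trans (hv.symm.mono le_sup_left)).trans hGadj.reachable
      · exact h.mono le_sup_left
    intro a b
    exact (key a).trans (key b).symm
  · -- acyclic
    intro u c hc
    have hGd : (D ⊔ edge v y) \ fromEdgeSet {s(v, y)} = D := del_sup_edge hnadj
    have hbridge : (D ⊔ edge v y).IsBridge s(v, y) := by
      rw [isBridge_iff, deleteEdges, hGd]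
      exact fun hr => hb (hv.symm.trans hr)
    have hf : s(v, y) ∉ c.edges :=
      ((isBridge_iff_adj_and_forall_cycle_notMem hGadj).mp hbridge) c hc
    have hsub : ∀ e ∈ c.edges, e ∈ S.edgeSet := by
      intro e he
      have h1 : e ∈ (D ⊔ edge v y).edgeSet := c.edges_subset_edgeSet he
      rw [edgeSet_sup, edge_edgeSet_of_ne hvy] at h1
      rcases h1 with h1 | h1
      · exact edgeSet_mono (sdiff_le : D ≤ S) h1
      · exact absurd (Set.mem_singleton_iff.mp h1 ▸ he) hf
    exact hS.IsAcyclic (c.transfer S hsub) (hc.transfer hsub)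

lemma swap_le (hTS : T ≤ S) (he : s(x, y) ∉ T.edgeSet) :
    T ≤ (S \ fromEdgeSet {s(x, y)}) ⊔ edge v y := by
  intro a b hab
  refine (sup_adj _ _ _ _).mpr (Or.inl ?_)
  rw [sdiff_adj, fromEdgeSet_adj]
  refine ⟨hTS hab, fun hf => he ?_⟩
  rw [← Set.mem_singleton_iff.mp hf.1]
  exact hab

lemma swap_inj {S' : SimpleGraph V} {v' : V}
    (hS : S.IsTree) (hS' : S'.IsTree) (hxy : S.Adj x y) (hxy' : S'.Adj x y)
    (hv : (S \ fromEdgeSet {s(x, y)}).Reachable v x)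
    (hv' : (S' \ fromEdgeSet {s(x, y)}).Reachable v' x)
    (heq : (S \ fromEdgeSet {s(x, y)}) ⊔ edge v y
        = (S' \ fromEdgeSet {s(x, y)}) ⊔ edge v' y) :
    v = v' ∧ S = S' := by
  classical
  set D := S \ fromEdgeSet {s(x, y)} with hDdef
  set D' := S' \ fromEdgeSet {s(x, y)} with hD'def
  have hb : ¬D.Reachable x y := not_reach_del hS.IsAcyclic hxy
  have hb' : ¬D'.Reachable x y := not_reach_del hS'.IsAcyclic hxy'
  have hvy : v ≠ y := v_ne_y hb hv
  have hv'y : v' ≠ y := v_ne_y hb' hv'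
  have hnadj : ¬D.Adj v y := not_adj_vy hb hv
  have hnadj' : ¬D'.Adj v' y := not_adj_vy hb' hv'
  by_cases hvv : v = v'
  · subst hvv
    have hDD : D = D' := by
      have h1 := congrArg (· \ fromEdgeSet {s(v, y)}) heq
      simpa only [del_sup_edge hnadj, del_sup_edge hnadj'] using h1
    refine ⟨rfl, ?_⟩
    rw [← sdiff_sup_edge_eq hxy, ← sdiff_sup_edge_eq hxy', ← hDdef, ← hD'def, hDD]
  · exfalso
    have hadj_in : ∀ {E E' : SimpleGraph V} {a b : V}, E ⊔ edge a y = E' ⊔ edge b y →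
        a ≠ b → a ≠ y → b ≠ y → E.Adj b y := by
      intro E E' a b hE hab hay hby
      have h1 : (E ⊔ edge a y).Adj b y := by
        rw [hE]
        exact (sup_adj _ _ _ _).mpr (Or.inr ((edge_adj b y b y).mpr ⟨Or.inl ⟨rfl, rfl⟩, hby⟩))
      rcases (sup_adj _ _ _ _).mp h1 with h1 | h1
      · exact h1
      · rcases ((edge_adj a y b y).mp h1).1 with ⟨h2, _⟩ | ⟨h2, h3⟩
        · exact absurd h2.symm hab
        · exact absurd h2 hby
    have h1 : D.Adj v' y := hadj_in heq hvv hvy hv'y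
    have h2 : D'.Adj v y := hadj_in heq.symm (Ne.symm hvv) hv'y hvy
    obtain ⟨p⟩ := hv
    by_cases hmem : s(v', y) ∈ p.edges
    · have hy : y ∈ p.support := p.snd_mem_support_of_mem_edges hmem
      have hr : D.Reachable v y := ⟨p.takeUntil y hy⟩
      exact hb ((hr.symm.trans ⟨p⟩).symm)
    · have hsub : ∀ e ∈ p.edges, e ∈ D'.edgeSet := by
        intro e he
        have h3 : e ∈ (D ⊔ edge v y).edgeSet :=
          edgeSet_mono le_sup_left (p.edges_subset_edgeSet he)
        rw [heq, edgeSet_sup, edge_edgeSet_of_ne hv'y] at h3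
        rcases h3 with h3 | h3
        · exact h3
        · exact absurd (Set.mem_singleton_iff.mp h3 ▸ he) hmem
      have hr : D'.Reachable v x := ⟨p.transfer D' hsub⟩
      exact hb' (hr.symm.trans h2.reachable)

end Swap

end TreeCountAux

/-- If `T ⊆ U` are forests in `K_n` with `U` having exactly one more edge than `T`, then
the number of spanning trees containing `T` is at least `n/2` times the number of
spanning trees containing `U`. -/
theorem tree_count_ratio (n : ℕ) (T U : SimpleGraph (Fin n)) (hTU : T ≤ U)
    (hU : U.IsAcyclic) (hcard : U.edgeSet.ncard = T.edgeSet.ncard + 1) :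
    n * Nat.card {S : SimpleGraph (Fin n) // S.IsTree ∧ U ≤ S}
      ≤ 2 * Nat.card {S : SimpleGraph (Fin n) // S.IsTree ∧ T ≤ S} := by
  classical
  open TreeCountAux in
  -- find the extra edge
  have hsubE : T.edgeSet ⊆ U.edgeSet := edgeSet_mono hTU
  have hnsub : ¬U.edgeSet ⊆ T.edgeSet := by
    intro h
    have heq : U.edgeSet = T.edgeSet := Set.Subset.antisymm h hsubE
    rw [heq] at hcard
    omega
  obtain ⟨x, y, hxyU, hxyT⟩ : ∃ x y, s(x, y) ∈ U.edgeSet ∧ s(x, y) ∉ T.edgeSet := by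
    obtain ⟨e, heU, heT⟩ := Set.not_subset.mp hnsub
    revert heU heT
    induction e using Sym2.ind with
    | _ x y => exact fun heU heT => ⟨x, y, heU, heT⟩
  have hxyU' : U.Adj x y := hxyU
  have hxyT' : s(y, x) ∉ T.edgeSet := by rwa [Sym2.eq_swap]
  -- reaching the other side
  have hreach : ∀ (S : SimpleGraph (Fin n)), S.IsTree → ∀ w : Fin n,
      ¬(S \ SimpleGraph.fromEdgeSet {s(x, y)}).Reachable w x →
      (S \ SimpleGraph.fromEdgeSet {s(y, x)}).Reachable w y := by
    intro S hS w hn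
    rw [Sym2.eq_swap]
    rcases reach_del y (hS.isConnected w x) with h | h
    · exact absurd h hn
    · exact h
  -- the injection
  set F : (Fin n × {S : SimpleGraph (Fin n) // S.IsTree ∧ U ≤ S}) →
      (Bool × {S : SimpleGraph (Fin n) // S.IsTree ∧ T ≤ S}) := fun p =>
    if h : ((p.2 : SimpleGraph (Fin n)) \ SimpleGraph.fromEdgeSet {s(x, y)}).Reachable p.1 x then
      (true, ⟨_, swap_isTree p.2.2.1 (p.2.2.2 hxyU') h,
        swap_le (hTU.trans p.2.2.2) hxyT⟩)
    else
      (false, ⟨_, swap_isTree p.2.2.1 ((p.2.2.2 hxyU').symm) (hreach _ p.2.2.1 p.1 h),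
        swap_le (hTU.trans p.2.2.2) hxyT'⟩) with hF
  have hFinj : Function.Injective F := by
    rintro ⟨w, S, hS, hUS⟩ ⟨w', S', hS', hUS'⟩ h
    simp only [hF] at h
    split_ifs at h with h1 h2 h2
    · rw [Prod.mk.injEq, Subtype.mk.injEq] at h
      obtain ⟨rfl, rfl⟩ := swap_inj hS hS' (hUS hxyU') (hUS' hxyU') h1 h2 h.2
      rfl
    · simp at h
    · simp at h
    · rw [Prod.mk.injEq, Subtype.mk.injEq] at h
      obtain ⟨rfl, rfl⟩ := swap_inj hS hS' ((hUS hxyU').symm) ((hUS' hxyU').symm)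
        (hreach _ hS _ h1) (hreach _ hS' _ h2) h.2
      rfl
  calc n * Nat.card {S : SimpleGraph (Fin n) // S.IsTree ∧ U ≤ S}
      = Nat.card (Fin n × {S : SimpleGraph (Fin n) // S.IsTree ∧ U ≤ S}) := by
        rw [Nat.card_prod]; simp
    _ ≤ Nat.card (Bool × {S : SimpleGraph (Fin n) // S.IsTree ∧ T ≤ S}) :=
        Nat.card_le_card_of_injective F hFinj
    _ = 2 * Nat.card {S : SimpleGraph (Fin n) // S.IsTree ∧ T ≤ S} := by
        rw [Nat.card_prod]; simp
end

section
/- For all integers n and t with n ≥ 2t + 110, the inequality (n - t - 12)^(n - t - 14) > n^(n - 2t - 16) holds. -/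
open Real

lemma exp_pow_lt (s : ℕ) (M : ℝ) (hM : 99 ≤ M) :
    Real.exp 1 ^ (s + 13) < M ^ (s + 3) := by
  have h1 : Real.exp 1 ^ 13 < 99 ^ 3 := by
    calc Real.exp 1 ^ 13 < 2.7182818286 ^ 13 := by
          apply pow_lt_pow_left₀ Real.exp_one_lt_d9 (le_of_lt (Real.exp_pos 1))
          norm_num
      _ < 99 ^ 3 := by norm_num
  have h2 : Real.exp 1 ^ s ≤ 99 ^ s := by
    apply pow_le_pow_left₀ (le_of_lt (Real.exp_pos 1))
    have := Real.exp_one_lt_d9; linarith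
  calc Real.exp 1 ^ (s + 13) = Real.exp 1 ^ s * Real.exp 1 ^ 13 := by ring
    _ < 99 ^ s * 99 ^ 3 := by
        exact mul_lt_mul' h2 h1 (by positivity) (by positivity)
    _ = (99:ℝ) ^ (s + 3) := by ring
    _ ≤ M ^ (s + 3) := by
        apply pow_le_pow_left₀ (by norm_num) hM

/-- For integers `n, t` with `t ≥ 1` and `n ≥ 2t + 110`, we have
`(n - t - 12)^(n - t - 14) > n^(n - 2t - 16)`. -/
theorem pow_inequality (n t : ℕ) (ht : 1 ≤ t) (hn : 2 * t + 110 ≤ n) :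
    n ^ (n - 2 * t - 16) < (n - t - 12) ^ (n - t - 14) := by
  obtain ⟨s, rfl⟩ : ∃ s, t = s + 1 := ⟨t - 1, by omega⟩
  obtain ⟨j, rfl⟩ := Nat.exists_eq_add_of_le hn
  have h1 : 2 * (s+1) + 110 + j - 2 * (s+1) - 16 = 94 + j := by omega
  have h2 : 2 * (s+1) + 110 + j - (s+1) - 12 = s + 99 + j := by omega
  have h3 : 2 * (s+1) + 110 + j - (s+1) - 14 = s + 97 + j := by omega
  rw [h1, h2, h3]
  have key : ((2 * (s+1) + 110 + j : ℕ) : ℝ) ^ (94 + j) < ((s + 99 + j : ℕ) : ℝ) ^ (s + 97 + j) := by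
    set M : ℝ := ((s + 99 + j : ℕ) : ℝ) with hMdef
    have hM99 : (99:ℝ) ≤ M := by push_cast [hMdef]; linarith [Nat.cast_nonneg (α := ℝ) s, Nat.cast_nonneg (α := ℝ) j]
    have hMpos : (0:ℝ) < M := by linarith
    set a : ℝ := (s : ℝ) + 13 with hadef
    have ha_pos : 0 < a := by positivity
    have hN : ((2 * (s+1) + 110 + j : ℕ) : ℝ) = M + a := by push_cast [hMdef, hadef]; ring
    have hx_pos : 0 < a / M := div_pos ha_pos hMpos
    -- Step 1 : M + a < M * exp (a/M)
    have step1 : M + a < M * Real.exp (a / M) := by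
      have h := Real.add_one_lt_exp (ne_of_gt hx_pos)
      have := mul_lt_mul_of_pos_left h hMpos
      rw [mul_add, mul_one, mul_div_cancel₀ a (ne_of_gt hMpos)] at this
      linarith
    -- Step 2
    have step2 : (M + a) ^ (94 + j) < (M * Real.exp (a / M)) ^ (94 + j) := by
      apply pow_lt_pow_left₀ step1 (by positivity)
      omega
    -- Step 3 : rewrite
    have step3 : (M * Real.exp (a / M)) ^ (94 + j)
        = M ^ (94 + j) * Real.exp ((94 + j : ℕ) * (a / M)) := by
      rw [mul_pow, ← Real.exp_nat_mul]
    -- Step 4 : exp ((94+j) * (a/M)) ≤ exp a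
    have step4 : Real.exp ((94 + j : ℕ) * (a / M)) ≤ Real.exp a := by
      apply Real.exp_le_exp.mpr
      rw [mul_div_assoc'] ; rw [div_le_iff₀ hMpos]
      have hle : ((94 + j : ℕ) : ℝ) ≤ M := by push_cast [hMdef]; linarith [Nat.cast_nonneg (α := ℝ) s]
      nlinarith
    -- Step 5 : exp a = exp 1 ^ (s + 13)
    have step5 : Real.exp a = Real.exp 1 ^ (s + 13) := by
      rw [← Real.exp_nat_mul, mul_one]
      congr 1
      push_cast [hadef]; ring
    have step6 : Real.exp a < M ^ (s + 3) := by
      rw [step5]; exact exp_pow_lt s M hM99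
    calc ((2 * (s+1) + 110 + j : ℕ) : ℝ) ^ (94 + j) = (M + a) ^ (94 + j) := by rw [hN]
      _ < (M * Real.exp (a / M)) ^ (94 + j) := step2
      _ = M ^ (94 + j) * Real.exp ((94 + j : ℕ) * (a / M)) := step3
      _ ≤ M ^ (94 + j) * Real.exp a := by
          apply mul_le_mul_of_nonneg_left step4 (by positivity)
      _ < M ^ (94 + j) * M ^ (s + 3) := by
          apply mul_lt_mul_of_pos_left step6 (by positivity)
      _ = M ^ (s + 97 + j) := by rw [← pow_add]; ring_nf
  exact_mod_cast key
end
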